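/- arXiv:2307.09399 — 11 statements merged into one kernel-verified Lean document; each statement's English description precedes it below -/
import Mathlib

section
/- For all integers c ≥ 6 and g ≥ 1, the quantity t(c,g) satisfies the recurrence t(c,g) = t(c−1,g) + t(c−2,g−1) + t(c−2,g) + t(c−3,g−1) − t(c−3,g). -/
/-- `tKnot c g` is t(c,g), the number of words in the partially double counted set T(c)
representing 2-bridge knots of crossing number `c` and genus `g`, given by the explicit
formula t(c,g) = (-1)^(c-1) * Σ_{n=0}^{c-2g-1} (-1)^n * binom(n+2g-1, n), the sum being
empty when c - 2g - 1 < 0, and t(c,0) = 0. -/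
def tKnot (c g : ℕ) : ℤ :=
  if g = 0 then 0
  else (-1 : ℤ) ^ (c - 1) *
    ∑ n ∈ Finset.range (c - 2 * g), (-1 : ℤ) ^ n * (Nat.choose (n + 2 * g - 1) n)

/-- Auxiliary alternating partial sum of binomial coefficients. -/
def Saux (j m : ℕ) : ℤ :=
  ∑ n ∈ Finset.range m, (-1 : ℤ) ^ n * (Nat.choose (n + j) n)

lemma Saux_succ (j k : ℕ) :
    Saux j (k + 1) = Saux j k + (-1 : ℤ) ^ k * (Nat.choose (k + j) k) :=
  Finset.sum_range_succ _ k

lemma tKnot_eq (c g : ℕ) (hg : 1 ≤ g) :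
    tKnot c g = (-1 : ℤ) ^ (c - 1) * Saux (2 * g - 1) (c - 2 * g) := by
  rw [tKnot, if_neg (by omega), Saux]
  congr 1
  refine Finset.sum_congr rfl fun n _ => ?_
  rw [show n + 2 * g - 1 = n + (2 * g - 1) by omega]

lemma pascal4 (N k : ℕ) :
    (N+3).choose (k+3) + N.choose k + (N+1).choose (k+3) + N.choose (k+2)
      = (N+2).choose (k+2) + (N+1).choose (k+1) + 2 * ((N+1).choose (k+3) + N.choose (k+2)) := by
  have h1 : (N+3).choose (k+3) = (N+2).choose (k+2) + (N+2).choose (k+3) :=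
    Nat.choose_succ_succ (N+2) (k+2)
  have h2 : (N+2).choose (k+3) = (N+1).choose (k+2) + (N+1).choose (k+3) :=
    Nat.choose_succ_succ (N+1) (k+2)
  have h3 : (N+1).choose (k+2) = N.choose (k+1) + N.choose (k+2) :=
    Nat.choose_succ_succ N (k+1)
  have h4 : (N+1).choose (k+1) = N.choose k + N.choose (k+1) :=
    Nat.choose_succ_succ N k
  omega

lemma pascal4' (N k : ℕ) :
    (N+3).choose (k+3) + N.choose k
      = (N+2).choose (k+2) + (N+1).choose (k+1) + (N+1).choose (k+3) + N.choose (k+2) := by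
  have := pascal4 N k
  omega

lemma key (j m : ℕ) :
    Saux j (m+3) + Saux j (m+2) - Saux j (m+1) - Saux j m
      = (-1 : ℤ) ^ m * (Nat.choose (m + j) (m + 2)) := by
  induction m with
  | zero =>
    simp [Saux, Finset.sum_range_succ, Nat.choose_one_right]
    have b1 : (2+j).choose 2 = (1+j).choose 1 + (1+j).choose 2 := by
      rw [show 2+j = (1+j)+1 by omega]; exact Nat.choose_succ_succ (1+j) 1
    have b2 : (1+j).choose 2 = j.choose 1 + j.choose 2 := by
      rw [show 1+j = j+1 by omega]; exact Nat.choose_succ_succ j 1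
    simp [Nat.choose_one_right] at b1 b2
    have hbz : ((2+j).choose 2 : ℤ) = (j.choose 2 : ℤ) + (2*(j:ℤ)+1) := by
      have : (2+j).choose 2 = j.choose 2 + (2*j+1) := by omega
      exact_mod_cast this
    linear_combination hbz
  | succ m ih =>
    have e4 : Saux j (m+4) = Saux j (m+3) + (-1:ℤ)^(m+3) * (Nat.choose (m+3+j) (m+3)) :=
      Saux_succ j (m+3)
    have e3 : Saux j (m+3) = Saux j (m+2) + (-1:ℤ)^(m+2) * (Nat.choose (m+2+j) (m+2)) :=
      Saux_succ j (m+2)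
    have e2 : Saux j (m+2) = Saux j (m+1) + (-1:ℤ)^(m+1) * (Nat.choose (m+1+j) (m+1)) :=
      Saux_succ j (m+1)
    have e1 : Saux j (m+1) = Saux j m + (-1:ℤ)^m * (Nat.choose (m+j) m) :=
      Saux_succ j m
    simp only [show m+1+3 = m+4 by omega, show m+1+2 = m+3 by omega,
      show m+1+1 = m+2 by omega]
    rw [e4, e3, e2, e1]
    rw [e3, e2, e1] at ih
    have hp : ((m+3+j).choose (m+3) : ℤ) + (m+j).choose m
        = (m+2+j).choose (m+2) + (m+1+j).choose (m+1)
          + (m+1+j).choose (m+3) + (m+j).choose (m+2) := by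
      have := pascal4' (m+j) m
      have hr1 : m+j+3 = m+3+j := by omega
      have hr2 : m+j+2 = m+2+j := by omega
      have hr3 : m+j+1 = m+1+j := by omega
      rw [hr1, hr2, hr3] at this
      exact_mod_cast this
    have hrhs : (Nat.choose (m+1+j) (m+1+2) : ℤ) = (Nat.choose (m+1+j) (m+3) : ℤ) := by
      rw [show m+1+2 = m+3 by omega]
    rw [hrhs]
    linear_combination ih - ((-1:ℤ)^m) * hp

/-- For all integers c ≥ 6 and g ≥ 1,
t(c,g) = t(c−1,g) + t(c−2,g−1) + t(c−2,g) + t(c−3,g−1) − t(c−3,g). -/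
theorem tKnot_recurrence (c g : ℕ) (hc : 6 ≤ c) (hg : 1 ≤ g) :
    tKnot c g =
      tKnot (c - 1) g + tKnot (c - 2) (g - 1) + tKnot (c - 2) g +
        tKnot (c - 3) (g - 1) - tKnot (c - 3) g := by
  obtain ⟨d, rfl⟩ : ∃ d, c = d + 6 := ⟨c - 6, by omega⟩
  have h0 : ∀ x, tKnot x 0 = 0 := fun x => if_pos rfl
  simp only [show d+6-1 = d+5 by omega, show d+6-2 = d+4 by omega, show d+6-3 = d+3 by omega]
  match g, hg with
  | 1, _ =>
    simp only [show (1:ℕ) - 1 = 0 from rfl, h0]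
    rw [tKnot_eq (d+6) 1 (by omega), tKnot_eq (d+5) 1 (by omega),
        tKnot_eq (d+4) 1 (by omega), tKnot_eq (d+3) 1 (by omega)]
    simp only [show 2*1-1 = 1 by omega, show (d+6)-2*1 = d+4 by omega,
      show (d+5)-2*1 = d+3 by omega, show (d+4)-2*1 = d+2 by omega,
      show (d+3)-2*1 = d+1 by omega, show d+6-1 = d+5 by omega,
      show d+5-1 = d+4 by omega, show d+4-1 = d+3 by omega, show d+3-1 = d+2 by omega]
    have hk := key 1 (d+1)
    simp only [show d+1+3 = d+4 by omega, show d+1+2 = d+3 by omega,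
      show d+1+1 = d+2 by omega] at hk
    rw [Nat.choose_eq_zero_of_lt (by omega)] at hk
    push_cast at hk
    linear_combination ((-1:ℤ)^(d+5)) * hk
  | (e+2), _ =>
    simp only [show e+2-1 = e+1 by omega]
    rw [tKnot_eq (d+6) (e+2) (by omega), tKnot_eq (d+5) (e+2) (by omega),
        tKnot_eq (d+4) (e+1) (by omega), tKnot_eq (d+4) (e+2) (by omega),
        tKnot_eq (d+3) (e+1) (by omega), tKnot_eq (d+3) (e+2) (by omega)]
    simp only [show 2*(e+2)-1 = 2*e+3 by omega, show 2*(e+1)-1 = 2*e+1 by omega,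
      show d+6-1 = d+5 by omega, show d+5-1 = d+4 by omega, show d+4-1 = d+3 by omega,
      show d+3-1 = d+2 by omega]
    rcases lt_or_ge d (2*e+1) with hd | hd
    · rcases Nat.lt_or_ge (d+2) (2*e+1) with hd2 | hd2
      · -- m = 0 : all sums empty
        simp only [show (d+6)-2*(e+2) = 0 by omega, show (d+5)-2*(e+2) = 0 by omega,
          show (d+4)-2*(e+1) = 0 by omega, show (d+4)-2*(e+2) = 0 by omega,
          show (d+3)-2*(e+1) = 0 by omega, show (d+3)-2*(e+2) = 0 by omega]
        simp [Saux]
      · by_cases hde : d = 2*e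
        · -- d = 2e, m = 2
          simp only [show (d+6)-2*(e+2) = 2 by omega, show (d+5)-2*(e+2) = 1 by omega,
            show (d+4)-2*(e+1) = 2 by omega, show (d+4)-2*(e+2) = 0 by omega,
            show (d+3)-2*(e+1) = 1 by omega, show (d+3)-2*(e+2) = 0 by omega]
          simp [Saux, Finset.sum_range_succ, Nat.choose_one_right]
          ring
        · -- d + 1 = 2e, m = 1
          simp only [show (d+6)-2*(e+2) = 1 by omega, show (d+5)-2*(e+2) = 0 by omega,
            show (d+4)-2*(e+1) = 1 by omega, show (d+4)-2*(e+2) = 0 by omega,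
            show (d+3)-2*(e+1) = 0 by omega, show (d+3)-2*(e+2) = 0 by omega]
          simp [Saux, Finset.sum_range_succ]
          ring
    · -- d ≥ 2e+1 : m = k+3
      obtain ⟨k, hdk⟩ : ∃ k, d = 2*e+1+k := ⟨d - (2*e+1), by omega⟩
      simp only [show (d+6)-2*(e+2) = k+3 by omega, show (d+5)-2*(e+2) = k+2 by omega,
        show (d+4)-2*(e+1) = k+3 by omega, show (d+4)-2*(e+2) = k+1 by omega,
        show (d+3)-2*(e+1) = k+2 by omega, show (d+3)-2*(e+2) = k by omega]
      have hk := key (2*e+3) k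
      have hs : Saux (2*e+1) (k+3)
          = Saux (2*e+1) (k+2) + (-1:ℤ)^(k+2) * (Nat.choose (k + (2*e+3)) (k+2)) := by
        have := Saux_succ (2*e+1) (k+2)
        rw [show k+2+(2*e+1) = k+(2*e+3) by omega] at this
        exact this
      linear_combination (-(-1:ℤ)^d) * hk + ((-1:ℤ)^d) * hs
end

section
/- For all integers c ≥ 7 and g ≥ 1, the quantity t_p(c,g) satisfies the recurrence t_p(c,g) = t_p(c−2,g−1) + t_p(c−4,g) + t_p(c−4,g−1). -/
/-- `tpKnot c g` is t_p(c,g), the number of words of palindromic type representing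
2-bridge knots of crossing number `c` and genus `g`, given by the explicit formula
t_p(c,g) = (-1)^(c'-g-1) * Σ_{n=0}^{c'-g-1} (-1)^n * binom(n+g-1, n) with
c' = ⌊(c+1)/2⌋, the sum being empty when c' - g - 1 < 0, and t_p(c,0) = 0. -/
def tpKnot (c g : ℕ) : ℤ :=
  if g = 0 then 0
  else (-1 : ℤ) ^ ((c + 1) / 2 - g - 1) *
    ∑ n ∈ Finset.range ((c + 1) / 2 - g), (-1 : ℤ) ^ n * (Nat.choose (n + g - 1) n)

private lemma tp_key (g k : ℕ) :
    (-1:ℤ)^(k-1) * ∑ n ∈ Finset.range k, (-1:ℤ)^n * ((n+g+1).choose n : ℤ)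
    = (-1:ℤ)^(k-1) * ∑ n ∈ Finset.range k, (-1:ℤ)^n * ((n+g).choose n : ℤ)
    + (-1:ℤ)^(k-3) * ∑ n ∈ Finset.range (k-2), (-1:ℤ)^n * ((n+g+1).choose n : ℤ)
    + (-1:ℤ)^(k-2) * ∑ n ∈ Finset.range (k-1), (-1:ℤ)^n * ((n+g).choose n : ℤ) := by
  match k with
  | 0 => simp
  | 1 => simp
  | 2 =>
    simp [Finset.sum_range_succ, Nat.choose_one_right]
    ring
  | (j+3) =>
    have h1 : j + 3 - 1 = j + 2 := by omega
    have h2 : j + 3 - 2 = j + 1 := by omega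
    have h3 : j + 3 - 3 = j := by omega
    rw [h1, h2, h3]
    have E1 : ∀ f : ℕ → ℤ, ∑ n ∈ Finset.range (j+3), f n
        = ∑ n ∈ Finset.range (j+1), f n + f (j+1) + f (j+2) := by
      intro f
      rw [show j+3 = (j+2)+1 from rfl, Finset.sum_range_succ,
        show j+2 = (j+1)+1 from rfl, Finset.sum_range_succ]
    have E2 : ∀ f : ℕ → ℤ, ∑ n ∈ Finset.range (j+2), f n
        = ∑ n ∈ Finset.range (j+1), f n + f (j+1) := by
      intro f
      rw [show j+2 = (j+1)+1 from rfl, Finset.sum_range_succ]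
    rw [E1, E1, E2]
    have pascal : ((j+2+g+1).choose (j+2) : ℤ)
        = ((j+1+g+1).choose (j+1) : ℤ) + ((j+2+g).choose (j+2) : ℤ) := by
      have h : (j+2+g+1).choose (j+2) = (j+2+g).choose (j+1) + (j+2+g).choose (j+2) :=
        Nat.choose_succ_succ (j+2+g) (j+1)
      rw [show j+1+g+1 = j+2+g by omega]
      exact_mod_cast h
    rw [pascal]
    ring

/-- For all integers c ≥ 7 and g ≥ 1,
t_p(c,g) = t_p(c−2,g−1) + t_p(c−4,g) + t_p(c−4,g−1). -/
theorem tpKnot_recurrence (c g : ℕ) (hc : 7 ≤ c) (hg : 1 ≤ g) :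
    tpKnot c g = tpKnot (c - 2) (g - 1) + tpKnot (c - 4) g + tpKnot (c - 4) (g - 1) := by
  have ha : 4 ≤ (c + 1) / 2 := by omega
  have hc2 : (c - 2 + 1) / 2 = (c + 1) / 2 - 1 := by omega
  have hc4 : (c - 4 + 1) / 2 = (c + 1) / 2 - 2 := by omega
  set a := (c + 1) / 2 with hadef
  match g with
  | 1 =>
    simp only [tpKnot, hc2, hc4]
    norm_num
    obtain ⟨b, hb⟩ : ∃ b, a = b + 4 := ⟨a - 4, by omega⟩
    have e2 : a - 1 = b + 3 := by omega
    have e4 : a - 2 - 1 = b + 1 := by omega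
    rw [e2, e4]
    rcases Nat.even_or_odd b with h | h <;>
      simp [Nat.even_add_one, h, Nat.not_even_iff_odd, pow_succ]
  | (g2+2) =>
    simp only [tpKnot, hc2, hc4]
    norm_num
    set k := a - (g2+2) with hkdef
    have r2 : a - 1 - (g2 + 1) - 1 = k - 1 := by omega
    have r1 : a - 1 - (g2 + 1) = k := by omega
    have r5 : a - 2 - (g2 + 1) = k - 1 := by omega
    have r6 : a - 2 - (g2 + 1) - 1 = k - 2 := by omega
    have r3 : a - 2 - (g2 + 2) - 1 = k - 3 := by omega
    have r4 : a - 2 - (g2 + 2) = k - 2 := by omega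
    have r7 : k - 2 - 1 = k - 3 := by omega
    simp only [r2, r1, r3, r4, r6, r5, r7]
    have := tp_key g2 k
    simp only [show ∀ n : ℕ, n + g2 + 1 = n + (g2+1) from fun n => by omega] at this
    exact this
end

section
/- For all integers c ≥ 5 and g ≥ 2, t_p(c,g) = t_p(c−2,g) + t_p(c−2,g−1). -/
/-- Auxiliary alternating sum. -/
def tpS (k g : ℕ) : ℤ :=
  ∑ n ∈ Finset.range k, (-1 : ℤ) ^ n * (Nat.choose (n + g - 1) n)

lemma tpS_key (g : ℕ) (hg : 2 ≤ g) : ∀ k, tpS (k+1) g = tpS (k+1) (g-1) - tpS k g := by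
  intro k
  induction k with
  | zero => simp [tpS]
  | succ k ih =>
    have h1 : tpS (k+2) g = tpS (k+1) g + (-1:ℤ)^(k+1) * (Nat.choose (k+1+g-1) (k+1)) := by
      simp [tpS, Finset.sum_range_succ]
    have h2 : tpS (k+2) (g-1)
        = tpS (k+1) (g-1) + (-1:ℤ)^(k+1) * (Nat.choose (k+1+(g-1)-1) (k+1)) := by
      simp [tpS, Finset.sum_range_succ]
    have h3 : tpS (k+1) g = tpS k g + (-1:ℤ)^k * (Nat.choose (k+g-1) k) := by
      simp [tpS, Finset.sum_range_succ]
    have hp : (k+1+g-1).choose (k+1) = (k+1+(g-1)-1).choose (k+1) + (k+g-1).choose k := by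
      obtain ⟨g', rfl⟩ : ∃ g', g = g' + 2 := ⟨g - 2, by omega⟩
      have e1 : k + 1 + (g' + 2) - 1 = (k + g' + 1) + 1 := by omega
      have e2 : k + 1 + (g' + 2 - 1) - 1 = k + g' + 1 := by omega
      have e3 : k + (g' + 2) - 1 = k + g' + 1 := by omega
      rw [e1, e2, e3, Nat.choose_succ_succ, add_comm]
    have hpz : ((k+1+g-1).choose (k+1) : ℤ)
        = ((k+1+(g-1)-1).choose (k+1) : ℤ) + ((k+g-1).choose k : ℤ) := by exact_mod_cast hp
    linear_combination h1 - h2 + h3 + ih + (-1:ℤ)^(k+1) * hpz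

/-- For all integers c ≥ 5 and g ≥ 2, t_p(c,g) = t_p(c−2,g) + t_p(c−2,g−1). -/
theorem tpKnot_pascal (c g : ℕ) (hc : 5 ≤ c) (hg : 2 ≤ g) :
    tpKnot c g = tpKnot (c - 2) g + tpKnot (c - 2) (g - 1) := by
  have hg0 : g ≠ 0 := by omega
  have hg1 : g - 1 ≠ 0 := by omega
  have hm2 : (c - 2 + 1) / 2 = (c + 1) / 2 - 1 := by omega
  simp only [tpKnot, if_neg hg0, if_neg hg1, hm2]
  set m := (c + 1) / 2 with hm
  have hm3 : 3 ≤ m := by omega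
  show (-1:ℤ)^(m - g - 1) * tpS (m - g) g
      = (-1:ℤ)^(m - 1 - g - 1) * tpS (m - 1 - g) g
        + (-1:ℤ)^(m - 1 - (g-1) - 1) * tpS (m - 1 - (g-1)) (g-1)
  rcases le_or_gt m g with h | h
  · have e1 : m - g = 0 := by omega
    have e2 : m - 1 - g = 0 := by omega
    have e3 : m - 1 - (g-1) = 0 := by omega
    simp [e1, e2, e3, tpS]
  · obtain ⟨e, he⟩ : ∃ e, m = g + e + 1 := ⟨m - g - 1, by omega⟩
    have e2 : m - g - 1 = e := by omega
    have e3' : m - 1 - g - 1 = e - 1 := by omega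
    have e5 : m - 1 - (g - 1) - 1 = e := by omega
    have e1 : m - g = e + 1 := by omega
    have e3 : m - 1 - g = e := by omega
    have e4 : m - 1 - (g - 1) = e + 1 := by omega
    rw [e2, e3', e5, e1, e3, e4]
    rcases Nat.eq_zero_or_pos e with rfl | hep
    · have h1 : tpS 1 g = 1 := by simp [tpS]
      have h2 : tpS 1 (g-1) = 1 := by simp [tpS]
      have h3 : tpS 0 g = 0 := by simp [tpS]
      simp [h1, h2, h3]
    · obtain ⟨f, rfl⟩ : ∃ f, e = f + 1 := ⟨e - 1, by omega⟩
      have e6 : f + 1 - 1 = f := by omega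
      rw [e6, tpS_key g hg (f+1)]
      ring
end

section
/- Let n ≥ 1 and let a_1, …, a_n be nonnegative real numbers. Suppose the sequence is quasi-symmetric, i.e. either left-dominated (a_{n−j+1} ≤ a_j ≤ a_{n−j} for all 1 ≤ j ≤ ⌊n/2⌋) or right-dominated (a_j ≤ a_{n−j+1} ≤ a_{j+1} for all 1 ≤ j ≤ ⌊n/2⌋). Define m := (n+1)/2 if n is odd, m := n/2 if n is even and the sequence is left-dominated, and m := n/2 + 1 if n is even and the sequence is right-dominated. Then a_j ≤ a_m for every 1 ≤ j ≤ n, and moreover 2·Σ_{j=1}^{m} a_j ≥ Σ_{j=1}^{n} a_j and 2·Σ_{j=m}^{n} a_j ≥ Σ_{j=1}^{n} a_j. (That is, the index m is simultaneously a mode and a median of the distribution with weights a_1, …, a_n.) -/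
private lemma sum_reflect' (a : ℕ → ℝ) (n l u : ℕ) (hl : 1 ≤ l) (hl2 : l ≤ n)
    (hu : u ≤ n) :
    ∑ j ∈ Finset.Icc l u, a (n - j + 1) = ∑ j ∈ Finset.Icc (n - u + 1) (n - l + 1), a j := by
  refine Finset.sum_nbij' (fun j => n - j + 1) (fun j => n - j + 1) ?_ ?_ ?_ ?_ ?_ <;>
    intro x hx <;> simp only [Finset.mem_Icc] at hx ⊢ <;> first | rfl | omega

private lemma sum_shift' (a : ℕ → ℝ) (l u : ℕ) :
    ∑ j ∈ Finset.Icc l u, a (j + 1) = ∑ j ∈ Finset.Icc (l + 1) (u + 1), a j := by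
  refine Finset.sum_nbij' (fun j => j + 1) (fun j => j - 1) ?_ ?_ ?_ ?_ ?_ <;>
    intro x hx <;> simp only [Finset.mem_Icc] at hx ⊢ <;> first | rfl | omega

private lemma icc_split (a : ℕ → ℝ) (m n : ℕ) (h1 : 1 ≤ m) (h2 : m ≤ n) :
    ∑ j ∈ Finset.Icc 1 n, a j =
      ∑ j ∈ Finset.Icc 1 m, a j + ∑ j ∈ Finset.Icc (m + 1) n, a j := by
  have e1 : Finset.Icc 1 n = Finset.Ioc 0 n := rfl
  have e2 : Finset.Icc 1 m = Finset.Ioc 0 m := rfl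
  have e3 : Finset.Icc (m + 1) n = Finset.Ioc m n := by
    ext x; simp [Finset.mem_Icc, Finset.mem_Ioc]
  rw [e1, e2, e3, Finset.sum_Ioc_consecutive _ (Nat.zero_le m) h2]

/-- Let n ≥ 1 and a₁, …, aₙ be nonnegative reals. If the sequence is left-dominated
quasi-symmetric (aₙ₋ⱼ₊₁ ≤ aⱼ ≤ aₙ₋ⱼ for 1 ≤ j ≤ ⌊n/2⌋), then with m := (n+1)/2
(which is (n+1)/2 for odd n and n/2 for even n), m is a mode and a median; if the
sequence is right-dominated quasi-symmetric (aⱼ ≤ aₙ₋ⱼ₊₁ ≤ aⱼ₊₁ for 1 ≤ j ≤ ⌊n/2⌋),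
then the same holds with m := n/2 + 1 (which is (n+1)/2 for odd n and n/2 + 1 for
even n). Here "m is a mode and a median" means aⱼ ≤ aₘ for all 1 ≤ j ≤ n, and
2·Σ_{j=1}^{m} aⱼ ≥ Σ_{j=1}^{n} aⱼ and 2·Σ_{j=m}^{n} aⱼ ≥ Σ_{j=1}^{n} aⱼ. -/
theorem quasiSymmetric_mode_eq_median (n : ℕ) (hn : 1 ≤ n) (a : ℕ → ℝ)
    (ha : ∀ j, 1 ≤ j → j ≤ n → 0 ≤ a j) :
    ((∀ j, 1 ≤ j → j ≤ n / 2 → a (n - j + 1) ≤ a j ∧ a j ≤ a (n - j)) →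
      ((∀ j, 1 ≤ j → j ≤ n → a j ≤ a ((n + 1) / 2)) ∧
        2 * ∑ j ∈ Finset.Icc 1 ((n + 1) / 2), a j ≥ ∑ j ∈ Finset.Icc 1 n, a j ∧
        2 * ∑ j ∈ Finset.Icc ((n + 1) / 2) n, a j ≥ ∑ j ∈ Finset.Icc 1 n, a j)) ∧
    ((∀ j, 1 ≤ j → j ≤ n / 2 → a j ≤ a (n - j + 1) ∧ a (n - j + 1) ≤ a (j + 1)) →
      ((∀ j, 1 ≤ j → j ≤ n → a j ≤ a (n / 2 + 1)) ∧
        2 * ∑ j ∈ Finset.Icc 1 (n / 2 + 1), a j ≥ ∑ j ∈ Finset.Icc 1 n, a j ∧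
        2 * ∑ j ∈ Finset.Icc (n / 2 + 1) n, a j ≥ ∑ j ∈ Finset.Icc 1 n, a j)) := by
  constructor
  · -- left-dominated
    intro hL
    set m := (n + 1) / 2 with hm
    have hm1 : 1 ≤ m := by omega
    have hmn : m ≤ n := by omega
    -- increasing up to n/2, capped by a m
    have key : ∀ k j, 1 ≤ j → j + k = n / 2 → a j ≤ a (n / 2) := by
      intro k
      induction k with
      | zero => intro j hj hjk; have : j = n / 2 := by omega
                rw [this]
      | succ k ih =>
        intro j hj hjk
        have h1 : a j ≤ a (n - j) := (hL j hj (by omega)).2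
        have h2 : a (n - (j+1) + 1) ≤ a (j + 1) := (hL (j+1) (by omega) (by omega)).1
        have e : n - (j+1) + 1 = n - j := by omega
        rw [e] at h2
        exact le_trans h1 (le_trans h2 (ih (j+1) (by omega) (by omega)))
    have half : ∀ j, 1 ≤ j → j ≤ n / 2 → a j ≤ a m := by
      intro j hj hj2
      have h1 : a j ≤ a (n / 2) := key (n / 2 - j) j hj (by omega)
      have h2 : a (n / 2) ≤ a (n - n / 2) := (hL (n/2) (by omega) le_rfl).2
      have e : n - n / 2 = m := by omega
      rw [e] at h2
      exact le_trans h1 h2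
    have mode : ∀ j, 1 ≤ j → j ≤ n → a j ≤ a m := by
      intro j hj hjn
      by_cases hjm : j = m
      · rw [hjm]
      by_cases hj2 : j ≤ n / 2
      · exact half j hj hj2
      · -- j ≥ m + 1
        have hjm1 : m + 1 ≤ j := by omega
        set k := n - j + 1 with hk
        have hk1 : 1 ≤ k := by omega
        have hk2 : k ≤ n / 2 := by omega
        have e : n - k + 1 = j := by omega
        have h1 : a (n - k + 1) ≤ a k := (hL k hk1 hk2).1
        rw [e] at h1
        exact le_trans h1 (half k hk1 hk2)
    refine ⟨mode, ?_, ?_⟩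
    · have split := icc_split a m n hm1 hmn
      have refl1 : ∑ j ∈ Finset.Icc (m + 1) n, a j
          = ∑ j ∈ Finset.Icc 1 (n - m), a (n - j + 1) := by
        rw [sum_reflect' a n 1 (n - m) le_rfl (by omega) (by omega)]
        congr 1
        congr 1 <;> omega
      have le1 : ∑ j ∈ Finset.Icc 1 (n - m), a (n - j + 1)
          ≤ ∑ j ∈ Finset.Icc 1 (n - m), a j := by
        apply Finset.sum_le_sum
        intro i hi; simp only [Finset.mem_Icc] at hi
        exact (hL i hi.1 (by omega)).1
      have le2 : ∑ j ∈ Finset.Icc 1 (n - m), a j ≤ ∑ j ∈ Finset.Icc 1 m, a j := by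
        apply Finset.sum_le_sum_of_subset_of_nonneg
        · apply Finset.Icc_subset_Icc_right; omega
        · intro i hi _; simp only [Finset.mem_Icc] at hi; exact ha i hi.1 (by omega)
      rw [ge_iff_le, split]; linarith [le_trans (le_of_eq refl1) (le_trans le1 le2)]
    · rcases Nat.lt_or_ge n 2 with hsmall | hn2
      · have hn1 : n = 1 := by omega
        have hm1' : m = 1 := by omega
        rw [hn1, hm1', Finset.Icc_self, Finset.sum_singleton]
        have := ha 1 le_rfl hn
        linarith
      have split : ∑ j ∈ Finset.Icc 1 n, a j =
          ∑ j ∈ Finset.Icc 1 (m - 1), a j + ∑ j ∈ Finset.Icc m n, a j := by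
        rcases Nat.eq_or_lt_of_le hm1 with h | h
        · simp [← h]
        · have := icc_split a (m - 1) n (by omega) (by omega)
          have e : m - 1 + 1 = m := by omega
          rw [e] at this; exact this
      have le1 : ∑ j ∈ Finset.Icc 1 (m - 1), a j
          ≤ ∑ j ∈ Finset.Icc 1 (m - 1), a ((n - 1) - j + 1) := by
        apply Finset.sum_le_sum
        intro i hi; simp only [Finset.mem_Icc] at hi
        have e : (n - 1) - i + 1 = n - i := by omega
        rw [e]
        exact (hL i hi.1 (by omega)).2
      have refl1 : ∑ j ∈ Finset.Icc 1 (m - 1), a ((n - 1) - j + 1)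
          = ∑ j ∈ Finset.Icc (n - m + 1) (n - 1), a j := by
        rw [sum_reflect' a (n - 1) 1 (m - 1) le_rfl (by omega) (by omega)]
        congr 1
        congr 1 <;> omega
      have le2 : ∑ j ∈ Finset.Icc (n - m + 1) (n - 1), a j ≤ ∑ j ∈ Finset.Icc m n, a j := by
        apply Finset.sum_le_sum_of_subset_of_nonneg
        · apply Finset.Icc_subset_Icc <;> omega
        · intro i hi _; simp only [Finset.mem_Icc] at hi; exact ha i (by omega) hi.2
      rw [ge_iff_le, split]; linarith [le_trans le1 (le_trans (le_of_eq refl1) le2)]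
  · -- right-dominated
    intro hR
    set m := n / 2 + 1 with hm
    have hm1 : 1 ≤ m := by omega
    have hmn : m ≤ n := by omega
    have key : ∀ k j, 1 ≤ j → j + k = m → a j ≤ a m := by
      intro k
      induction k with
      | zero => intro j hj hjk; have : j = m := by omega
                rw [this]
      | succ k ih =>
        intro j hj hjk
        have h1 : a j ≤ a (n - j + 1) := (hR j hj (by omega)).1
        have h2 : a (n - j + 1) ≤ a (j + 1) := (hR j hj (by omega)).2
        exact le_trans h1 (le_trans h2 (ih (j+1) (by omega) (by omega)))
    have half : ∀ j, 1 ≤ j → j ≤ m → a j ≤ a m := by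
      intro j hj hj2
      exact key (m - j) j hj (by omega)
    have mode : ∀ j, 1 ≤ j → j ≤ n → a j ≤ a m := by
      intro j hj hjn
      by_cases hj2 : j ≤ m
      · exact half j hj hj2
      · set k := n - j + 1 with hk
        have hk1 : 1 ≤ k := by omega
        have hk2 : k ≤ n / 2 := by omega
        have e : n - k + 1 = j := by omega
        have h1 : a (n - k + 1) ≤ a (k + 1) := (hR k hk1 hk2).2
        rw [e] at h1
        exact le_trans h1 (half (k+1) (by omega) (by omega))
    refine ⟨mode, ?_, ?_⟩
    · have split := icc_split a m n hm1 hmn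
      have refl1 : ∑ j ∈ Finset.Icc (m + 1) n, a j
          = ∑ j ∈ Finset.Icc 1 (n - m), a (n - j + 1) := by
        rw [sum_reflect' a n 1 (n - m) le_rfl (by omega) (by omega)]
        congr 1
        congr 1 <;> omega
      have le1 : ∑ j ∈ Finset.Icc 1 (n - m), a (n - j + 1)
          ≤ ∑ j ∈ Finset.Icc 1 (n - m), a (j + 1) := by
        apply Finset.sum_le_sum
        intro i hi; simp only [Finset.mem_Icc] at hi
        exact (hR i hi.1 (by omega)).2
      have sh : ∑ j ∈ Finset.Icc 1 (n - m), a (j + 1)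
          = ∑ j ∈ Finset.Icc 2 (n - m + 1), a j := sum_shift' a 1 (n - m)
      have le2 : ∑ j ∈ Finset.Icc 2 (n - m + 1), a j ≤ ∑ j ∈ Finset.Icc 1 m, a j := by
        apply Finset.sum_le_sum_of_subset_of_nonneg
        · apply Finset.Icc_subset_Icc <;> omega
        · intro i hi _; simp only [Finset.mem_Icc] at hi; exact ha i hi.1 (by omega)
      rw [ge_iff_le, split]
      linarith [le_trans (le_of_eq refl1) (le_trans le1 (le_trans (le_of_eq sh) le2))]
    · have split : ∑ j ∈ Finset.Icc 1 n, a j =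
          ∑ j ∈ Finset.Icc 1 (m - 1), a j + ∑ j ∈ Finset.Icc m n, a j := by
        rcases Nat.eq_or_lt_of_le hm1 with h | h
        · simp [← h]
        · have := icc_split a (m - 1) n (by omega) (by omega)
          have e : m - 1 + 1 = m := by omega
          rw [e] at this; exact this
      have le1 : ∑ j ∈ Finset.Icc 1 (m - 1), a j
          ≤ ∑ j ∈ Finset.Icc 1 (m - 1), a (n - j + 1) := by
        apply Finset.sum_le_sum
        intro i hi; simp only [Finset.mem_Icc] at hi
        exact (hR i hi.1 (by omega)).1
      have refl1 : ∑ j ∈ Finset.Icc 1 (m - 1), a (n - j + 1)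
          = ∑ j ∈ Finset.Icc (n - m + 2) n, a j := by
        rw [sum_reflect' a n 1 (m - 1) le_rfl (by omega) (by omega)]
        congr 1
        congr 1 <;> omega
      have le2 : ∑ j ∈ Finset.Icc (n - m + 2) n, a j ≤ ∑ j ∈ Finset.Icc m n, a j := by
        apply Finset.sum_le_sum_of_subset_of_nonneg
        · apply Finset.Icc_subset_Icc <;> omega
        · intro i hi _; simp only [Finset.mem_Icc] at hi; exact ha i (by omega) hi.2
      rw [ge_iff_le, split]; linarith [le_trans le1 (le_trans (le_of_eq refl1) le2)]
end

section
/- For every integer c ≥ 3, the sequence (t_p(c,1), t_p(c,2), …, t_p(c,N)) with N := ⌊(c−1)/2⌋ is right-dominated quasi-symmetric; that is, for all integers j with 1 ≤ j ≤ ⌊N/2⌋, t_p(c,j) ≤ t_p(c, N−j+1) ≤ t_p(c, j+1). -/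
/-- Sum of binomial coefficients `C(m,r) + C(m-2,r) + C(m-4,r) + ⋯`. -/
def Spar : ℕ → ℕ → ℕ
  | 0, r => Nat.choose 0 r
  | 1, r => Nat.choose 1 r
  | (m+2), r => Nat.choose (m+2) r + Spar m r

theorem spar_of_lt : ∀ {m r : ℕ}, m < r → Spar m r = 0
  | 0, r, h => by simp [Spar, Nat.choose_eq_zero_of_lt h]
  | 1, r, h => by simp [Spar, Nat.choose_eq_zero_of_lt h]
  | (m+2), r, h => by
      simp [Spar, Nat.choose_eq_zero_of_lt h, spar_of_lt (by omega : m < r)]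

theorem spar_self (r : ℕ) : Spar r r = 1 := by
  match r with
  | 0 => simp [Spar]
  | 1 => simp [Spar]
  | (m+2) => simp [Spar, spar_of_lt (by omega : m < m + 2)]

/-- Hockey-stick identity for `Spar`. -/
theorem spar_add (m r : ℕ) : Spar (m+1) r + Spar m r = Nat.choose (m+2) (r+1) := by
  induction m with
  | zero =>
      rcases r with _ | _ | r <;> simp [Spar, Nat.choose]
  | succ m ih =>
      have h1 : Spar (m+2) r = Nat.choose (m+2) r + Spar m r := rfl
      have h2 : Nat.choose (m+3) (r+1) = Nat.choose (m+2) r + Nat.choose (m+2) (r+1) :=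
        Nat.choose_succ_succ (m+2) r
      have h3 : m + 1 + 2 = m + 3 := by omega
      have h4 : Spar (m + 1 + 1) r = Spar (m + 2) r := rfl
      rw [h3]
      omega

/-- Monotonicity of binomial coefficients: `C(n,·)` increases while below the middle. -/
theorem choose_mono_of_add_le : ∀ {n r s : ℕ}, r ≤ s → r + s ≤ n →
    Nat.choose n r ≤ Nat.choose n s := by
  intro n r s hrs hn
  rcases eq_or_lt_of_le hrs with rfl | hlt
  · exact le_rfl
  rcases eq_or_lt_of_le hn with heq | hlt'
  · have hs : s ≤ n := by omega
    have : Nat.choose n s = Nat.choose n r := by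
      rw [← Nat.choose_symm hs]
      congr 1
      omega
    omega
  · have h1 : r < n / 2 := by omega
    have h2 : Nat.choose n r ≤ Nat.choose n (r+1) :=
      Nat.choose_le_succ_of_lt_half_left h1
    exact h2.trans (choose_mono_of_add_le (by omega) (by omega))
termination_by n r s => s - r

/-- Antitonicity of binomial coefficients past the middle. -/
theorem choose_anti_of_le_add {n r s : ℕ} (hrs : r ≤ s) (hn : n ≤ r + s) :
    Nat.choose n s ≤ Nat.choose n r := by
  rcases le_or_gt s n with hs | hs
  · calc Nat.choose n s = Nat.choose n (n - s) := (Nat.choose_symm hs).symm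
      _ ≤ Nat.choose n r := choose_mono_of_add_le (by omega) (by omega)
  · rw [Nat.choose_eq_zero_of_lt hs]
    exact Nat.zero_le _

/-- On the antidiagonal `r + s = m` (or beyond), `Spar m` is antitone. -/
theorem spar_anti : ∀ (m r s : ℕ), r ≤ s → m ≤ r + s → Spar m s ≤ Spar m r
  | 0, r, s, hrs, hm => choose_anti_of_le_add hrs hm
  | 1, r, s, hrs, hm => choose_anti_of_le_add hrs hm
  | (m+2), r, s, hrs, hm => by
      have h1 : Nat.choose (m+2) s ≤ Nat.choose (m+2) r := choose_anti_of_le_add hrs hm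
      have h2 : Spar m s ≤ Spar m r := spar_anti m r s hrs (by omega)
      simp only [Spar]
      omega

/-- On the antidiagonal `r + s + 1 = m`, `Spar m` is monotone. -/
theorem spar_mono (k r s : ℕ) (hrs : r ≤ s) (hk : r + s = k) :
    Spar (k+1) r ≤ Spar (k+1) s := by
  have ha := spar_add k r
  have hb := spar_add k s
  have h2 : Spar k s ≤ Spar k r := spar_anti k r s hrs (by omega)
  have hX : Nat.choose (k+2) (r+1) ≤ Nat.choose (k+2) (s+1) :=
    choose_mono_of_add_le (by omega) (by omega)
  omega

/-- The alternating sum of binomial coefficients along a diagonal equals `± Spar`. -/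
theorem sum_neg_one_pow_choose (r : ℕ) : ∀ (M : ℕ),
    ∑ n ∈ Finset.range (M+1), (-1 : ℤ) ^ n * (Nat.choose (n + r + 1) n : ℤ)
      = (-1 : ℤ) ^ M * (Spar (M + r) r : ℤ)
  | 0 => by simp [spar_self]
  | (M+1) => by
      rw [Finset.sum_range_succ, sum_neg_one_pow_choose r M]
      have hYZ : Nat.choose (M + 1 + r + 1) (M + 1) = Spar (M + 1 + r) r + Spar (M + r) r := by
        rw [Nat.choose_symm_of_eq_add (show M + 1 + r + 1 = (M + 1) + (r + 1) by omega),
          show M + 1 + r + 1 = (M + r) + 2 by omega, ← spar_add (M + r) r,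
          show M + 1 + r = M + r + 1 by omega]
      have hC : ((Nat.choose (M + 1 + r + 1) (M + 1) : ℕ) : ℤ)
          = (Spar (M + 1 + r) r : ℤ) + (Spar (M + r) r : ℤ) := by
        exact_mod_cast congrArg (Nat.cast : ℕ → ℤ) hYZ
      linear_combination ((-1 : ℤ) ^ (M + 1)) * hC

/-- `tpKnot` in terms of `Spar`, for `2 ≤ g ≤ (c-1)/2`. -/
theorem tpKnot_eq_spar (c g : ℕ) (h2 : 2 ≤ g) (hg : g ≤ (c - 1) / 2) :
    tpKnot c g = (Spar ((c - 1) / 2 - 2) (g - 2) : ℤ) := by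
  obtain ⟨r, rfl⟩ : ∃ r, g = r + 2 := ⟨g - 2, by omega⟩
  obtain ⟨M, hM⟩ : ∃ M, (c - 1) / 2 - (r + 2) = M := ⟨_, rfl⟩
  have hc2 : (c + 1) / 2 - (r + 2) = M + 1 := by omega
  have hN2 : (c - 1) / 2 - 2 = M + r := by omega
  rw [tpKnot, if_neg (by omega), hc2, Nat.add_sub_cancel, hN2,
    show r + 2 - 2 = r by omega]
  have hb : ∀ n : ℕ, n + (r + 2) - 1 = n + r + 1 := fun n => by omega
  simp only [hb]
  rw [sum_neg_one_pow_choose r M, ← mul_assoc, ← pow_add,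
    Even.neg_one_pow ⟨M, by ring⟩, one_mul]

theorem tpKnot_one_le_one (c : ℕ) : tpKnot c 1 ≤ 1 := by
  rw [tpKnot, if_neg one_ne_zero]
  have hb : ∀ n : ℕ, Nat.choose (n + 1 - 1) n = 1 := fun n => by
    simp
  simp only [hb, Nat.cast_one, mul_one]
  rw [neg_one_geom_sum]
  split
  · simp
  · rcases Nat.even_or_odd ((c + 1) / 2 - 1 - 1) with h | h
    · rw [h.neg_one_pow]; norm_num
    · rw [h.neg_one_pow]; norm_num

/-- For every c ≥ 3, the sequence (t_p(c,1), …, t_p(c,N)) with N = ⌊(c−1)/2⌋ is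
right-dominated quasi-symmetric: t_p(c,j) ≤ t_p(c, N−j+1) ≤ t_p(c, j+1) for
all 1 ≤ j ≤ ⌊N/2⌋. -/
theorem tpKnot_right_dominated (c : ℕ) (hc : 3 ≤ c) (j : ℕ) (hj : 1 ≤ j)
    (hj' : j ≤ ((c - 1) / 2) / 2) :
    tpKnot c j ≤ tpKnot c ((c - 1) / 2 - j + 1) ∧
      tpKnot c ((c - 1) / 2 - j + 1) ≤ tpKnot c (j + 1) := by
  set N := (c - 1) / 2 with hN
  have hN2 : 2 ≤ N := by omega
  have h2j : 2 * j ≤ N := by omega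
  have hmid : tpKnot c (N - j + 1) = (Spar (N - 2) (N - j - 1) : ℤ) := by
    rw [tpKnot_eq_spar c (N - j + 1) (by omega) (by omega),
      show N - j + 1 - 2 = N - j - 1 by omega]
  have hright : tpKnot c (j + 1) = (Spar (N - 2) (j - 1) : ℤ) := by
    rw [tpKnot_eq_spar c (j + 1) (by omega) (by omega),
      show j + 1 - 2 = j - 1 by omega]
  constructor
  · rcases eq_or_lt_of_le hj with rfl | hj1
    · rw [hmid, show N - 1 - 1 = N - 2 by omega, spar_self]
      exact_mod_cast tpKnot_one_le_one c
    · rw [hmid, tpKnot_eq_spar c j (by omega) (by omega)]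
      have h := spar_mono (N - 3) (j - 2) (N - j - 1) (by omega) (by omega)
      rw [show N - 3 + 1 = N - 2 by omega] at h
      exact_mod_cast h
  · rw [hmid, hright]
    exact_mod_cast spar_anti (N - 2) (j - 1) (N - j - 1) (by omega) (by omega)
end

section
/- For every integer c ≥ 3, set N := ⌊(c−1)/2⌋. If c is odd, the sequence (t(c,1), …, t(c,N)) is left-dominated quasi-symmetric: t(c, N−j+1) ≤ t(c,j) ≤ t(c, N−j) for all 1 ≤ j ≤ ⌊N/2⌋. If c is even, the sequence (t(c,1), …, t(c,N)) is right-dominated quasi-symmetric: t(c,j) ≤ t(c, N−j+1) ≤ t(c, j+1) for all 1 ≤ j ≤ ⌊N/2⌋. -/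
/-- The Pascal-like array: a(p,0) = (-1)^p, a(0,q) = 1, a(p,q)=a(p-1,q)+a(p,q-1). -/
def aa : ℕ → ℕ → ℤ
  | p, 0 => (-1) ^ p
  | 0, _ + 1 => 1
  | p + 1, q + 1 => aa p (q + 1) + aa (p + 1) q

lemma aa_zero_left (q : ℕ) : aa 0 q = 1 := by cases q <;> simp [aa]

lemma aa_one (p : ℕ) : aa p 1 = if Even p then 1 else 0 := by
  induction p with
  | zero => simp [aa]
  | succ p ih =>
    have : aa (p+1) 1 = aa p 1 + aa (p+1) 0 := by simp [aa]
    have h0 : aa (p+1) 0 = (-1 : ℤ)^(p+1) := by simp [aa]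
    rw [this, ih, h0]
    rcases Nat.even_or_odd p with h | h
    · have : ¬ Even (p+1) := by simp [Nat.even_add_one, h]
      rw [if_pos h, if_neg this, (Nat.odd_add_one.mpr (Nat.not_odd_iff_even.mpr h)).neg_one_pow]
      ring
    · have h1 : Even (p+1) := Nat.even_add_one.mpr (Nat.not_even_iff_odd.mpr h)
      rw [if_neg (Nat.not_even_iff_odd.mpr h), if_pos h1, h1.neg_one_pow]
      ring

lemma one_le_aa_two (p : ℕ) : 1 ≤ aa p 2 := by
  induction p with
  | zero => simp [aa_zero_left]
  | succ p ih =>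
    have : aa (p+1) 2 = aa p 2 + aa (p+1) 1 := by simp [aa]
    rw [this, aa_one]
    split <;> omega

lemma sum_rec (p q : ℕ) :
    ∑ n ∈ Finset.range (p+2), (-1:ℤ)^n * ((n + q).choose n : ℤ)
      = ∑ n ∈ Finset.range (p+2), (-1:ℤ)^n * ((n + q - 1).choose n : ℤ)
        - ∑ n ∈ Finset.range (p+1), (-1:ℤ)^n * ((n + q).choose n : ℤ) := by
  rw [Finset.sum_range_succ' (fun n => (-1:ℤ)^n * ((n + q).choose n : ℤ)) (p+1),
      Finset.sum_range_succ' (fun n => (-1:ℤ)^n * ((n + q - 1).choose n : ℤ)) (p+1)]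
  have h1 : ∀ k : ℕ, (-1:ℤ)^(k+1) * ((k+1+q).choose (k+1) : ℤ)
      = (-1:ℤ)^(k+1) * ((k+1+q-1).choose (k+1) : ℤ) - (-1:ℤ)^k * ((k+q).choose k : ℤ) := by
    intro k
    have e2 : k+1+q-1 = k+q := by omega
    rw [e2]
    have e1 : k+1+q = (k+q)+1 := by omega
    rw [e1, Nat.choose_succ_succ]
    push_cast
    ring
  rw [Finset.sum_congr rfl (fun k _ => h1 k), Finset.sum_sub_distrib]
  simp
  ring

lemma aa_eq (p : ℕ) : ∀ q : ℕ, 1 ≤ q →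
    aa p q = (-1:ℤ)^p * ∑ n ∈ Finset.range (p+1), (-1:ℤ)^n * ((n + q - 1).choose n : ℤ) := by
  induction p with
  | zero =>
    intro q hq
    simp [aa_zero_left, Finset.sum_range_one]
  | succ p ih =>
    intro q
    induction q with
    | zero => omega
    | succ q ihq =>
      intro _
      have hrec : aa (p+1) (q+1) = aa p (q+1) + aa (p+1) q := by simp [aa]
      have hcs : ∀ n : ℕ, n + (q+1) - 1 = n + q := by omega
      rcases Nat.eq_zero_or_pos q with rfl | hq1
      · -- q + 1 = 1
        have hsum : ∑ n ∈ Finset.range (p+2), (-1:ℤ)^n * ((n + 1 - 1).choose n : ℤ)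
            = ∑ n ∈ Finset.range (p+2), (-1:ℤ)^n := by
          refine Finset.sum_congr rfl fun n _ => ?_
          rw [show n + 1 - 1 = n from by omega, Nat.choose_self]
          simp
        rw [show p + 1 + 1 = p + 2 from rfl] at *
        rw [hsum, neg_one_geom_sum, aa_one]
        rcases Nat.even_or_odd p with h | h
        · have h2 : Even (p+2) := by simpa [Nat.even_add] using h
          have h1 : ¬ Even (p+1) := by simp [Nat.even_add_one, h]
          rw [if_neg h1, if_pos h2]
          ring
        · have h2 : ¬ Even (p+2) := by
            simp [Nat.even_add, Nat.not_even_iff_odd.mpr h]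
          have h1 : Even (p+1) := Nat.even_add_one.mpr (Nat.not_even_iff_odd.mpr h)
          rw [if_pos h1, if_neg h2, h1.neg_one_pow]
          norm_num
      · rw [hrec, ih (q+1) (by omega), ihq (by omega)]
        simp only [hcs]
        simp only [show p + 1 + 1 = p + 2 from rfl]
        rw [sum_rec p q]
        ring

lemma tKnot_eq_aa (c g : ℕ) (hg : 1 ≤ g) (hc : 2*g + 1 ≤ c) :
    tKnot c g = aa (c - 2*g - 1) (2*g) := by
  rw [tKnot, if_neg (by omega), aa_eq _ (2*g) (by omega)]
  rw [show c - 2*g - 1 + 1 = c - 2*g from by omega,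
      show c - 1 = (c - 2*g - 1) + 2*g from by omega, pow_add,
      show ((-1:ℤ))^(2*g) = 1 from by rw [pow_mul]; norm_num]
  ring

lemma star : ∀ n s t : ℕ, s + t ≤ n → 1 ≤ t → t ≤ s →
    aa s t ≤ aa (t-1) (s+1) ∧ aa (t-1) (s+1) ≤ aa (s-1) (t+1) := by
  intro n
  induction n with
  | zero => intro s t h h1 h2; omega
  | succ n ih =>
    intro s t hn h1 hts
    obtain ⟨t', rfl⟩ : ∃ t', t = t' + 1 := ⟨t - 1, by omega⟩
    rcases Nat.eq_zero_or_pos t' with rfl | ht'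
    · -- t = 1
      refine ⟨?_, ?_⟩
      · rw [aa_zero_left, aa_one]
        split <;> norm_num
      · rw [show (0+1-1 : ℕ) = 0 from rfl, aa_zero_left]
        exact one_le_aa_two _
    · obtain ⟨u, rfl⟩ : ∃ u, t' = u + 1 := ⟨t' - 1, by omega⟩
      obtain ⟨s', rfl⟩ : ∃ s', s = s' + 2 := ⟨s - 2, by omega⟩
      -- t = u+2, s = s'+2, u ≤ s'
      have hus : u ≤ s' := by omega
      have exp1 : aa (s'+2) (u+2) = aa (s'+1) (u+2) + aa (s'+2) (u+1) := by simp [aa]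
      have exp2 : aa (u+1) (s'+3) = aa u (s'+3) + aa (u+1) (s'+2) := by simp [aa]
      have exp3 : aa (s'+1) (u+3) = aa s' (u+3) + aa (s'+1) (u+2) := by simp [aa]
      simp only [show u+2-1 = u+1 from rfl, show s'+2+1 = s'+3 from rfl,
        show s'+2-1 = s'+1 from rfl, show u+2+1 = u+3 from rfl]
      rcases eq_or_lt_of_le hus with rfl | hlt
      · -- u = s'
        have IH := ih (u+2) (u+1) (by omega) (by omega) (by omega)
        simp only [show u+1-1 = u from rfl, show u+2+1 = u+3 from rfl] at IH
        constructor
        · rw [exp1, exp2]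
          have h2 : aa (u+2) (u+1) ≤ aa u (u+3) := IH.1
          have h3 : aa (u+1) (u+2) ≤ aa (u+1) (u+2) := le_refl _
          linarith
        · exact le_refl _
      · -- u < s'
        have IH1 := ih (s'+1) (u+2) (by omega) (by omega) (by omega)
        have IH2 := ih (s'+2) (u+1) (by omega) (by omega) (by omega)
        simp only [show u+2-1 = u+1 from rfl, show s'+1+1 = s'+2 from rfl,
          show s'+1-1 = s' from rfl, show u+2+1 = u+3 from rfl] at IH1
        simp only [show u+1-1 = u from rfl, show s'+2+1 = s'+3 from rfl,
          show s'+2-1 = s'+1 from rfl, show u+1+1 = u+2 from rfl] at IH2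
        constructor
        · rw [exp1, exp2]
          have := IH1.1
          have := IH2.1
          linarith
        · rw [exp2, exp3]
          have := IH1.2
          have := IH2.2
          linarith


/-- For every c ≥ 3, with N = ⌊(c−1)/2⌋: if c is odd, the sequence (t(c,1), …, t(c,N))
is left-dominated quasi-symmetric (t(c,N−j+1) ≤ t(c,j) ≤ t(c,N−j) for 1 ≤ j ≤ ⌊N/2⌋),
and if c is even it is right-dominated quasi-symmetric
(t(c,j) ≤ t(c,N−j+1) ≤ t(c,j+1) for 1 ≤ j ≤ ⌊N/2⌋). -/
theorem tKnot_quasi_symmetric (c : ℕ) (hc : 3 ≤ c) :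
    (Odd c → ∀ j, 1 ≤ j → j ≤ ((c - 1) / 2) / 2 →
      tKnot c ((c - 1) / 2 - j + 1) ≤ tKnot c j ∧
        tKnot c j ≤ tKnot c ((c - 1) / 2 - j)) ∧
    (Even c → ∀ j, 1 ≤ j → j ≤ ((c - 1) / 2) / 2 →
      tKnot c j ≤ tKnot c ((c - 1) / 2 - j + 1) ∧
        tKnot c ((c - 1) / 2 - j + 1) ≤ tKnot c (j + 1)) := by
  constructor
  · -- odd case
    rintro ⟨N, hN⟩ j hj1 hj2
    have hN' : c = 2*N + 1 := by omega
    have h2j : 2*j ≤ N := by omega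
    have e1 : tKnot c j = aa (2*N - 2*j) (2*j) := by
      rw [tKnot_eq_aa c j hj1 (by omega)]; congr 1; omega
    have e2 : tKnot c ((c-1)/2 - j) = aa (2*j) (2*N - 2*j) := by
      rw [show (c-1)/2 - j = N - j from by omega,
        tKnot_eq_aa c (N-j) (by omega) (by omega)]
      congr 1 <;> omega
    have e3 : tKnot c ((c-1)/2 - j + 1) = aa (2*j - 2) (2*N - 2*j + 2) := by
      rw [show (c-1)/2 - j + 1 = N - j + 1 from by omega,
        tKnot_eq_aa c (N-j+1) (by omega) (by omega)]
      congr 1 <;> omega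
    constructor
    · rw [e3, e1]
      have hs := (star (2*N+2) (2*N - 2*j + 1) (2*j - 1) (by omega) (by omega)
        (by omega)).2
      simp only [show 2*j - 1 - 1 = 2*j - 2 from by omega,
        show 2*N - 2*j + 1 + 1 = 2*N - 2*j + 2 from rfl,
        show 2*N - 2*j + 1 - 1 = 2*N - 2*j from rfl,
        show 2*j - 1 + 1 = 2*j from by omega] at hs
      exact hs
    · rw [e1, e2]
      rcases eq_or_lt_of_le h2j with heq | hlt
      · rw [show 2*N - 2*j = 2*j from by omega]
      · have hs1 := star (2*N+2) (2*N - 2*j) (2*j) (by omega) (by omega) (by omega)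
        have hs2 := (star (2*N+2) (2*N - 2*j - 1) (2*j + 1) (by omega) (by omega)
          (by omega)).1
        simp only [show 2*j - 1 + 1 = 2*j from by omega,
          show 2*N - 2*j - 1 + 1 = 2*N - 2*j from by omega,
          show 2*j + 1 - 1 = 2*j from rfl] at hs1 hs2
        exact le_trans hs1.1 (le_trans hs1.2 hs2)
  · -- even case
    rintro heven j hj1 hj2
    obtain ⟨N, hN'⟩ : ∃ N, c = 2*N + 2 := by
      obtain ⟨k, hk⟩ := heven; exact ⟨k - 1, by omega⟩
    have h2j : 2*j ≤ N := by omega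
    have e1 : tKnot c j = aa (2*N + 1 - 2*j) (2*j) := by
      rw [tKnot_eq_aa c j hj1 (by omega)]; congr 1; omega
    have e2 : tKnot c ((c-1)/2 - j + 1) = aa (2*j - 1) (2*N - 2*j + 2) := by
      rw [show (c-1)/2 - j + 1 = N - j + 1 from by omega,
        tKnot_eq_aa c (N-j+1) (by omega) (by omega)]
      congr 1 <;> omega
    have e3 : tKnot c (j + 1) = aa (2*N - 2*j - 1) (2*j + 2) := by
      rw [tKnot_eq_aa c (j+1) (by omega) (by omega)]
      congr 1 <;> omega
    constructor
    · rw [e1, e2]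
      have hs := (star (2*N+2) (2*N + 1 - 2*j) (2*j) (by omega) (by omega)
        (by omega)).1
      simp only [show 2*j - 1 = 2*j - 1 from rfl,
        show 2*N + 1 - 2*j + 1 = 2*N - 2*j + 2 from by omega] at hs
      exact hs
    · rw [e2, e3]
      rcases eq_or_lt_of_le h2j with heq | hlt
      · rw [show 2*j - 1 = 2*N - 2*j - 1 from by omega,
          show 2*N - 2*j + 2 = 2*j + 2 from by omega]
      · have hs1 := (star (2*N+2) (2*N + 1 - 2*j) (2*j) (by omega) (by omega)
          (by omega)).2
        have hs2 := star (2*N+2) (2*N - 2*j) (2*j + 1) (by omega) (by omega)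
          (by omega)
        simp only [show 2*N + 1 - 2*j + 1 = 2*N - 2*j + 2 from by omega,
          show 2*N + 1 - 2*j - 1 = 2*N - 2*j from by omega,
          show 2*j + 1 - 1 = 2*j from rfl,
          show 2*N - 2*j + 1 = 2*N - 2*j + 1 from rfl,
          show 2*N - 2*j - 1 + 1 = 2*N - 2*j from by omega,
          show 2*j + 1 + 1 = 2*j + 2 from rfl] at hs1 hs2
        exact le_trans hs1 (le_trans hs2.1 hs2.2)
end

section
/- For all integers c ≥ 5, the total palindromic genus satisfies the recurrence g_p(c) = 2·g_p(c−2) + t_p(c−2) + (−1)^{⌊(c+1)/2⌋}. -/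
/-- `tpTotal c` is t_p(c) = Σ_{g=1}^{⌊(c−1)/2⌋} t_p(c,g), the number of words of palindromic type. -/
def tpTotal (c : ℕ) : ℤ := ∑ g ∈ Finset.Icc 1 ((c - 1) / 2), tpKnot c g

/-- `gpTotal c` is the total palindromic genus g_p(c) = Σ_{i=1}^{⌊(c−1)/2⌋} i·t_p(c,i). -/
def gpTotal (c : ℕ) : ℤ := ∑ i ∈ Finset.Icc 1 ((c - 1) / 2), (i : ℤ) * tpKnot c i

/-- auxiliary partial sum -/
def pS (N g : ℕ) : ℤ := ∑ n ∈ Finset.range N, (-1 : ℤ) ^ n * (Nat.choose (n + g - 1) n)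

/-- auxiliary F, tpKnot with k = (c+1)/2 abstracted -/
def pF (k g : ℕ) : ℤ := (-1 : ℤ) ^ (k - g - 1) * pS (k - g) g

lemma pS_succ (N g : ℕ) : pS (N+1) g = pS N g + (-1:ℤ)^N * (Nat.choose (N + g - 1) N) := by
  rw [pS, Finset.sum_range_succ, ← pS]

lemma pS_rec (g : ℕ) (hg : 2 ≤ g) (N : ℕ) : pS (N+1) g = pS (N+1) (g-1) - pS N g := by
  induction N with
  | zero =>
    simp [pS]
  | succ N ih =>
    have hA := pS_succ (N+1) g
    have hB := pS_succ (N+1) (g-1)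
    have hC := pS_succ N g
    have e1 : N + 1 + g - 1 = N + g := by omega
    have e2 : N + 1 + (g-1) - 1 = N + g - 1 := by omega
    have e3 : N + g = (N + g - 1) + 1 := by omega
    have hP : ((N + g).choose (N+1) : ℤ) = (N + g - 1).choose N + (N + g - 1).choose (N+1) := by
      rw [e3, Nat.choose_succ_succ (N + g - 1) N]
      push_cast; ring
    rw [e1] at hA
    rw [e2] at hB
    linear_combination hA - hB + ih + hC - (-1:ℤ)^N * hP

lemma pF_pascal (k g : ℕ) (hg : 2 ≤ g) (hk : g + 1 ≤ k) :
    pF k g = pF (k-1) (g-1) + pF (k-1) g := by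
  obtain ⟨t, rfl⟩ : ∃ t, k = g + t + 1 := ⟨k - g - 1, by omega⟩
  have hA : pF (g+t+1) g = (-1:ℤ)^t * pS (t+1) g := by
    unfold pF
    rw [show g+t+1-g-1 = t from by omega, show g+t+1-g = t+1 from by omega]
  have hB : pF (g+t+1-1) (g-1) = (-1:ℤ)^t * pS (t+1) (g-1) := by
    unfold pF
    rw [show g+t+1-1-(g-1)-1 = t from by omega, show g+t+1-1-(g-1) = t+1 from by omega]
  have hC : pF (g+t+1-1) g = (-1:ℤ)^(t-1) * pS t g := by
    unfold pF
    rw [show g+t+1-1-g-1 = t-1 from by omega, show g+t+1-1-g = t from by omega]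
  rw [hA, hB, hC, pS_rec g hg t]
  cases t with
  | zero => simp [pS]
  | succ s =>
    rw [show s + 1 - 1 = s from rfl, pow_succ]
    ring

lemma sum_neg_one_pow (N : ℕ) : ∑ n ∈ Finset.range N, (-1:ℤ)^n = if Even N then 0 else 1 := by
  induction N with
  | zero => simp
  | succ N ih =>
    rw [Finset.sum_range_succ, ih]
    rcases Nat.even_or_odd N with h | h
    · simp [h, Nat.even_add_one, h.neg_one_pow]
    · simp [Nat.not_even_iff_odd.mpr h, Nat.even_add_one, h.neg_one_pow,
        Nat.not_even_iff_odd.mpr h]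

lemma pF_one (k : ℕ) (hk : 1 ≤ k) : pF k 1 = if Even k then 1 else 0 := by
  have : pS (k-1) 1 = if Even (k-1) then 0 else 1 := by
    rw [pS]
    simp only [Nat.add_sub_cancel, Nat.choose_self, Nat.cast_one, mul_one]
    exact sum_neg_one_pow (k-1)
  rw [pF, this]
  obtain ⟨m, rfl⟩ : ∃ m, k = m + 1 := ⟨k - 1, by omega⟩
  simp only [Nat.add_sub_cancel]
  rcases Nat.even_or_odd m with h | h
  · have h1 : ¬ Even (m+1) := by simp [Nat.even_add_one, h]
    have h2 : m + 1 - 1 - 1 = m - 1 := by omega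
    simp [h, h1]
  · have h1 : Even (m+1) := by simp [Nat.even_add_one, Nat.not_even_iff_odd.mpr h]
    have h2 : m + 1 - 1 - 1 = m - 1 := by omega
    have h3 : ¬ Even m := Nat.not_even_iff_odd.mpr h
    obtain ⟨s, rfl⟩ : ∃ s, m = 2*s+1 := by obtain ⟨s, hs⟩ := h; exact ⟨s, by omega⟩
    have h4 : 2*s+1+1-1-1 = 2*s := by omega
    simp [h1, h3, h4, pow_mul]

lemma pF_step_one (k : ℕ) (hk : 2 ≤ k) : pF k 1 = pF (k-1) 1 + (-1:ℤ)^k := by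
  rw [pF_one k (by omega), pF_one (k-1) (by omega)]
  rcases Nat.even_or_odd k with h | h
  · have h0 : k % 2 = 0 := Nat.even_iff.mp h
    have h1 : ¬ Even (k-1) := by rw [Nat.even_iff]; omega
    simp [h, h1, h.neg_one_pow]
  · have h0 : k % 2 = 1 := Nat.odd_iff.mp h
    have h1 : Even (k-1) := by rw [Nat.even_iff]; omega
    have h2 : ¬ Even k := by rw [Nat.even_iff]; omega
    simp [h2, h1, h.neg_one_pow]

lemma pF_top (k : ℕ) (hk : 2 ≤ k) : pF k (k-1) = 1 := by
  rw [pF, show k - (k-1) - 1 = 0 from by omega, show k - (k-1) = 1 from by omega, pS]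
  simp

lemma pF_diag (k : ℕ) : pF k k = 0 := by
  simp [pF, pS, Nat.sub_self]

lemma key_s11 (k : ℕ) (hk : 3 ≤ k) :
    ∑ i ∈ Finset.Icc 1 (k-1), (i:ℤ) * pF k i
      = 2 * ∑ i ∈ Finset.Icc 1 (k-2), (i:ℤ) * pF (k-1) i
        + ∑ i ∈ Finset.Icc 1 (k-2), pF (k-1) i + (-1:ℤ)^k := by
  obtain ⟨m, rfl⟩ : ∃ m, k = m + 3 := ⟨k - 3, by omega⟩
  have r1 : m + 3 - 1 = m + 2 := rfl
  have r2 : m + 3 - 2 = m + 1 := rfl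
  rw [r1, r2]
  -- peel off i = 1 from LHS
  have hins : Finset.Icc 1 (m+2) = insert 1 (Finset.Icc 2 (m+2)) := by
    ext x; simp; omega
  rw [hins, Finset.sum_insert (by simp)]
  -- Pascal on the rest
  have hpas : ∑ i ∈ Finset.Icc 2 (m+2), (i:ℤ) * pF (m+3) i
      = ∑ i ∈ Finset.Icc 2 (m+2), ((i:ℤ) * pF (m+2) (i-1) + (i:ℤ) * pF (m+2) i) := by
    refine Finset.sum_congr rfl fun i hi => ?_
    simp only [Finset.mem_Icc] at hi
    rw [pF_pascal (m+3) i hi.1 (by omega), show m+3-1 = m+2 from rfl]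
    ring
  rw [hpas, Finset.sum_add_distrib]
  -- reindex the shifted sum
  have hmap : Finset.Icc 2 (m+2) = (Finset.Icc 1 (m+1)).map (addRightEmbedding 1) := by
    rw [Finset.map_add_right_Icc]
  have hshift : ∑ i ∈ Finset.Icc 2 (m+2), (i:ℤ) * pF (m+2) (i-1)
      = ∑ x ∈ Finset.Icc 1 (m+1), ((x:ℤ)+1) * pF (m+2) x := by
    rw [hmap, Finset.sum_map]
    refine Finset.sum_congr rfl fun x _ => ?_
    simp [addRightEmbedding_apply]
  rw [hshift]
  -- drop the vanishing top term of the other sum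
  have htop : ∑ i ∈ Finset.Icc 2 (m+2), (i:ℤ) * pF (m+2) i
      = ∑ i ∈ Finset.Icc 2 (m+1), (i:ℤ) * pF (m+2) i := by
    rw [show m + 2 = (m+1) + 1 from rfl, Finset.sum_Icc_succ_top (by omega), pF_diag]
    ring
  rw [htop]
  -- relations
  have hsplit : ∑ i ∈ Finset.Icc 1 (m+1), (i:ℤ) * pF (m+2) i
      = pF (m+2) 1 + ∑ i ∈ Finset.Icc 2 (m+1), (i:ℤ) * pF (m+2) i := by
    rw [show Finset.Icc 1 (m+1) = insert 1 (Finset.Icc 2 (m+1)) from by ext x; simp; omega,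
      Finset.sum_insert (by simp)]
    norm_num
  have hsum : ∑ x ∈ Finset.Icc 1 (m+1), ((x:ℤ)+1) * pF (m+2) x
      = ∑ x ∈ Finset.Icc 1 (m+1), (x:ℤ) * pF (m+2) x
        + ∑ x ∈ Finset.Icc 1 (m+1), pF (m+2) x := by
    rw [← Finset.sum_add_distrib]
    refine Finset.sum_congr rfl fun x _ => by ring
  have hstep : pF (m+3) 1 = pF (m+2) 1 + (-1:ℤ)^(m+3) := pF_step_one (m+3) (by omega)
  rw [hsum, hstep, hsplit]
  push_cast
  ring

/-- For all integers c ≥ 5, the total palindromic genus satisfies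
g_p(c) = 2·g_p(c−2) + t_p(c−2) + (−1)^{⌊(c+1)/2⌋}. -/
theorem gpTotal_recurrence (c : ℕ) (hc : 5 ≤ c) :
    gpTotal c = 2 * gpTotal (c - 2) + tpTotal (c - 2) + (-1 : ℤ) ^ ((c + 1) / 2) := by
  have htp : ∀ (c' i : ℕ), i ≠ 0 → tpKnot c' i = pF ((c'+1)/2) i := by
    intro c' i h
    rw [tpKnot, if_neg h, pF, pS]
  have hk : 3 ≤ (c+1)/2 := by omega
  have e1 : (c-1)/2 = (c+1)/2 - 1 := by omega
  have e2 : (c-2-1)/2 = (c+1)/2 - 2 := by omega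
  have e3 : (c-2+1)/2 = (c+1)/2 - 1 := by omega
  rw [gpTotal, gpTotal, tpTotal, e1, e2]
  have hL : ∑ i ∈ Finset.Icc 1 ((c+1)/2 - 1), (i:ℤ) * tpKnot c i
      = ∑ i ∈ Finset.Icc 1 ((c+1)/2 - 1), (i:ℤ) * pF ((c+1)/2) i := by
    refine Finset.sum_congr rfl fun i hi => ?_
    simp only [Finset.mem_Icc] at hi
    rw [htp c i (by omega)]
  have hR1 : ∑ i ∈ Finset.Icc 1 ((c+1)/2 - 2), (i:ℤ) * tpKnot (c-2) i
      = ∑ i ∈ Finset.Icc 1 ((c+1)/2 - 2), (i:ℤ) * pF ((c+1)/2 - 1) i := by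
    refine Finset.sum_congr rfl fun i hi => ?_
    simp only [Finset.mem_Icc] at hi
    rw [htp (c-2) i (by omega), e3]
  have hR2 : ∑ i ∈ Finset.Icc 1 ((c+1)/2 - 2), tpKnot (c-2) i
      = ∑ i ∈ Finset.Icc 1 ((c+1)/2 - 2), pF ((c+1)/2 - 1) i := by
    refine Finset.sum_congr rfl fun i hi => ?_
    simp only [Finset.mem_Icc] at hi
    rw [htp (c-2) i (by omega), e3]
  rw [hL, hR1, hR2]
  exact key_s11 ((c+1)/2) hk
end

section
/- For all integers c ≥ 6, the total square genus satisfies the recurrence g2(c) = g2(c−1) + 2·g2(c−2) + g(c) + 2·g(c−3) − g(c−1). -/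
/-- `gTotal c` is the total genus g(c) = Σ_{i=1}^{⌊(c−1)/2⌋} i·t(c,i) of T(c). -/
def gTotal (c : ℕ) : ℤ := ∑ i ∈ Finset.Icc 1 ((c - 1) / 2), (i : ℤ) * tKnot c i

/-- `g2Total c` is the total square genus g²(c) = Σ_{i=1}^{⌊(c−1)/2⌋} i²·t(c,i) of T(c). -/
def g2Total (c : ℕ) : ℤ := ∑ i ∈ Finset.Icc 1 ((c - 1) / 2), (i : ℤ) ^ 2 * tKnot c i

lemma tKnot_eq_zero {c g : ℕ} (h : c ≤ 2 * g) : tKnot c g = 0 := by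
  unfold tKnot
  rcases eq_or_ne g 0 with rfl | hg
  · simp
  · rw [if_neg hg, show c - 2 * g = 0 by omega]
    simp

lemma pascal_key (a b : ℕ) : (a+b+2).choose (a+2) + (a+b).choose a
    = 2 * ((a+b+1).choose (a+1)) + (a+b).choose (a+2) := by
  have h1 : (a+b+2).choose (a+2) = (a+b+1).choose (a+1) + (a+b+1).choose (a+2) := by
    rw [show a+b+2 = (a+b+1)+1 by omega, show a+2 = (a+1)+1 by omega]
    exact Nat.choose_succ_succ _ _
  have h2 : (a+b+1).choose (a+1) = (a+b).choose a + (a+b).choose (a+1) := by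
    rw [show a+b+1 = (a+b)+1 by omega]
    exact Nat.choose_succ_succ _ _
  have h3 : (a+b+1).choose (a+2) = (a+b).choose (a+1) + (a+b).choose (a+2) := by
    rw [show a+b+1 = (a+b)+1 by omega, show a+2 = (a+1)+1 by omega]
    exact Nat.choose_succ_succ _ _
  omega

lemma tRec1 (m : ℕ) :
    tKnot (m+6) 1 = tKnot (m+5) 1 + tKnot (m+4) 1 - tKnot (m+3) 1 := by
  simp only [tKnot, if_neg one_ne_zero]
  rw [show m+6-1 = m+5 by omega, show m+5-1 = m+4 by omega, show m+4-1 = m+3 by omega,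
    show m+3-1 = m+2 by omega]
  rw [show m+6-2*1 = m+1+1+1+1 by omega, show m+5-2*1 = m+1+1+1 by omega,
    show m+4-2*1 = m+1+1 by omega, show m+3-2*1 = m+1 by omega]
  have hb : ∀ a : ℕ, ∑ n ∈ Finset.range a, (-1:ℤ)^n * ((n + 2*1 - 1).choose n : ℤ)
      = ∑ n ∈ Finset.range a, (-1:ℤ)^n * ((n:ℤ)+1) := by
    intro a
    refine Finset.sum_congr rfl fun n _ => ?_
    rw [show n + 2*1 - 1 = n+1 by omega, Nat.choose_succ_self_right]
    push_cast; ring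
  rw [hb, hb, hb, hb]
  simp only [Finset.sum_range_succ]
  push_cast
  ring

lemma tRecS (m k : ℕ) :
    tKnot (m+6) (k+2) = tKnot (m+5) (k+2) + tKnot (m+4) (k+2) - tKnot (m+3) (k+2)
      + tKnot (m+4) (k+1) + tKnot (m+3) (k+1) := by
  simp only [tKnot, if_neg (Nat.succ_ne_zero _)]
  rw [show m+6-1 = m+5 by omega, show m+5-1 = m+4 by omega, show m+4-1 = m+3 by omega,
    show m+3-1 = m+2 by omega]
  rcases (by omega : m + 2 ≤ 2*k ∨ m + 1 = 2*k ∨ m = 2*k ∨ 2*k + 1 ≤ m) with h | h | h | h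
  · rw [show m+6-2*(k+2) = 0 by omega, show m+5-2*(k+2) = 0 by omega,
      show m+4-2*(k+2) = 0 by omega, show m+3-2*(k+2) = 0 by omega,
      show m+4-2*(k+1) = 0 by omega, show m+3-2*(k+1) = 0 by omega]
    simp
  · rw [show m+6-2*(k+2) = 1 by omega, show m+5-2*(k+2) = 0 by omega,
      show m+4-2*(k+2) = 0 by omega, show m+3-2*(k+2) = 0 by omega,
      show m+4-2*(k+1) = 1 by omega, show m+3-2*(k+1) = 0 by omega]
    simp only [Finset.sum_range_one, Finset.sum_range_zero, pow_zero, one_mul,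
      Nat.choose_zero_right, Nat.cast_one]
    ring
  · rw [show m+6-2*(k+2) = 1+1 by omega, show m+5-2*(k+2) = 1 by omega,
      show m+4-2*(k+2) = 0 by omega, show m+3-2*(k+2) = 0 by omega,
      show m+4-2*(k+1) = 1+1 by omega, show m+3-2*(k+1) = 1 by omega]
    simp only [Finset.sum_range_succ, Finset.sum_range_one, Finset.sum_range_zero,
      pow_zero, one_mul, Nat.choose_zero_right, Nat.cast_one, pow_one]
    rw [show 1 + 2*(k+2) - 1 = 2*k+4 by omega, show 1 + 2*(k+1) - 1 = 2*k+2 by omega,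
      Nat.choose_one_right, Nat.choose_one_right]
    push_cast
    ring
  · obtain ⟨d, hd⟩ : ∃ d, m = 2*k+1+d := ⟨m - (2*k+1), by omega⟩
    rw [show m+6-2*(k+2) = d+1+1+1 by omega, show m+5-2*(k+2) = d+1+1 by omega,
      show m+4-2*(k+2) = d+1 by omega, show m+3-2*(k+2) = d by omega,
      show m+4-2*(k+1) = d+1+1+1 by omega, show m+3-2*(k+1) = d+1+1 by omega]
    simp only [Finset.sum_range_succ]
    rw [show d+1+1 + 2*(k+2) - 1 = d+(2*k+3)+2 by omega,
      show d+1 + 2*(k+2) - 1 = d+(2*k+3)+1 by omega,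
      show d + 2*(k+2) - 1 = d+(2*k+3) by omega,
      show d+1+1 + 2*(k+1) - 1 = d+(2*k+3) by omega,
      show d+1 + 2*(k+1) - 1 = d+(2*k+2) by omega,
      show d + 2*(k+1) - 1 = d+(2*k+1) by omega,
      show d+1+1 = d+2 by omega]
    have hp : ((d+(2*k+3)+2).choose (d+2) : ℤ) + (d+(2*k+3)).choose d
        = 2 * ((d+(2*k+3)+1).choose (d+1)) + (d+(2*k+3)).choose (d+2) := by
      exact_mod_cast congrArg (Nat.cast : ℕ → ℤ) (pascal_key d (2*k+3))
    linear_combination (-((-1:ℤ)^m * (-1)^d)) * hp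

lemma tRec (m k : ℕ) :
    tKnot (m+6) (k+1) = tKnot (m+5) (k+1) + tKnot (m+4) (k+1) - tKnot (m+3) (k+1)
      + tKnot (m+4) k + tKnot (m+3) k := by
  rcases k with _ | k
  · have h4 : tKnot (m+4) 0 = 0 := by simp [tKnot]
    have h3 : tKnot (m+3) 0 = 0 := by simp [tKnot]
    simpa [h4, h3] using tRec1 m
  · exact tRecS m k

lemma sum_repr_sub (c N : ℕ) (h : c ≤ 2 * N) :
    g2Total c - gTotal c = ∑ i ∈ Finset.range N, ((i:ℤ)^2 - (i:ℤ)) * tKnot c i := by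
  unfold g2Total gTotal
  rw [← Finset.sum_sub_distrib]
  rw [Finset.sum_congr rfl (fun i _ => by ring :
    ∀ i ∈ Finset.Icc 1 ((c-1)/2), (i:ℤ)^2 * tKnot c i - (i:ℤ) * tKnot c i
      = ((i:ℤ)^2 - (i:ℤ)) * tKnot c i)]
  apply Finset.sum_subset
  · intro i hi
    simp only [Finset.mem_Icc] at hi
    simp only [Finset.mem_range]
    omega
  · intro i hi hni
    simp only [Finset.mem_Icc, not_and, not_le] at hni
    rcases Nat.eq_zero_or_pos i with rfl | hp
    · simp
    · rw [tKnot_eq_zero (by have := hni hp; omega)]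
      ring

lemma sum_repr_add (c N : ℕ) (h : c ≤ 2 * N) :
    g2Total c + gTotal c = ∑ i ∈ Finset.range N, ((i:ℤ)^2 + (i:ℤ)) * tKnot c i := by
  unfold g2Total gTotal
  rw [← Finset.sum_add_distrib]
  rw [Finset.sum_congr rfl (fun i _ => by ring :
    ∀ i ∈ Finset.Icc 1 ((c-1)/2), (i:ℤ)^2 * tKnot c i + (i:ℤ) * tKnot c i
      = ((i:ℤ)^2 + (i:ℤ)) * tKnot c i)]
  apply Finset.sum_subset
  · intro i hi
    simp only [Finset.mem_Icc] at hi
    simp only [Finset.mem_range]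
    omega
  · intro i hi hni
    simp only [Finset.mem_Icc, not_and, not_le] at hni
    rcases Nat.eq_zero_or_pos i with rfl | hp
    · simp
    · rw [tKnot_eq_zero (by have := hni hp; omega)]
      ring

lemma shift_sum (c' N : ℕ) (h : c' ≤ 2 * N) :
    ∑ i ∈ Finset.range (N+1), ((i:ℤ)^2 - (i:ℤ)) * tKnot c' (i-1)
      = g2Total c' + gTotal c' := by
  rw [Finset.sum_range_succ']
  simp only [Nat.add_sub_cancel, Nat.cast_zero]
  rw [sum_repr_add c' N h]
  rw [Finset.sum_congr rfl (fun i hi => by push_cast; ring :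
    ∀ i ∈ Finset.range N, ((((i+1):ℕ):ℤ)^2 - (((i+1):ℕ):ℤ)) * tKnot c' i
      = ((i:ℤ)^2 + (i:ℤ)) * tKnot c' i)]
  ring

/-- For all integers c ≥ 6, the total square genus satisfies
g²(c) = g²(c−1) + 2·g²(c−2) + g(c) + 2·g(c−3) − g(c−1). -/
theorem g2Total_recurrence (c : ℕ) (hc : 6 ≤ c) :
    g2Total c =
      g2Total (c - 1) + 2 * g2Total (c - 2) + gTotal c + 2 * gTotal (c - 3) - gTotal (c - 1) := by
  obtain ⟨m, rfl⟩ : ∃ m, c = m + 6 := ⟨c - 6, by omega⟩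
  rw [show m+6-1 = m+5 by omega, show m+6-2 = m+4 by omega, show m+6-3 = m+3 by omega]
  have key : g2Total (m+6) - gTotal (m+6)
      = (g2Total (m+5) - gTotal (m+5)) + (g2Total (m+4) - gTotal (m+4))
        - (g2Total (m+3) - gTotal (m+3)) + (g2Total (m+4) + gTotal (m+4))
        + (g2Total (m+3) + gTotal (m+3)) := by
    rw [sum_repr_sub (m+6) (m+6) (by omega)]
    have step : ∀ i ∈ Finset.range (m+6), ((i:ℤ)^2 - (i:ℤ)) * tKnot (m+6) i
        = ((i:ℤ)^2 - (i:ℤ)) * tKnot (m+5) i + ((i:ℤ)^2 - (i:ℤ)) * tKnot (m+4) i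
          - ((i:ℤ)^2 - (i:ℤ)) * tKnot (m+3) i + ((i:ℤ)^2 - (i:ℤ)) * tKnot (m+4) (i-1)
          + ((i:ℤ)^2 - (i:ℤ)) * tKnot (m+3) (i-1) := by
      intro i _
      rcases i with _ | j
      · simp
      · rw [tRec m j, Nat.add_sub_cancel]
        ring
    rw [Finset.sum_congr rfl step]
    simp only [Finset.sum_add_distrib, Finset.sum_sub_distrib]
    rw [← sum_repr_sub (m+5) (m+6) (by omega), ← sum_repr_sub (m+4) (m+6) (by omega),
      ← sum_repr_sub (m+3) (m+6) (by omega),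
      show m+6 = (m+5)+1 by omega,
      shift_sum (m+4) (m+5) (by omega), shift_sum (m+3) (m+5) (by omega)]
  linarith [key]
end

section
/- For all integers c ≥ 6, the total square palindromic genus satisfies the recurrence g2_p(c) = 2·g2_p(c−2) + 2·g_p(c−2) + t_p(c−2) + (−1)^{⌊(c+1)/2⌋}. -/
/-- `g2pTotal c` is the total square palindromic genus g²_p(c) = Σ_{i=1}^{⌊(c−1)/2⌋} i²·t_p(c,i). -/
def g2pTotal (c : ℕ) : ℤ := ∑ i ∈ Finset.Icc 1 ((c - 1) / 2), (i : ℤ) ^ 2 * tpKnot c i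

/-! Auxiliary machinery -/

/-- `Tm m g` is `tpKnot c g` expressed through `m = (c+1)/2`. -/
def Tm (m g : ℕ) : ℤ :=
  if g = 0 then 0
  else (-1 : ℤ) ^ (m - g - 1) *
    ∑ n ∈ Finset.range (m - g), (-1 : ℤ) ^ n * (Nat.choose (n + g - 1) n)

lemma tpKnot_eq_Tm (c g : ℕ) : tpKnot c g = Tm ((c + 1) / 2) g := rfl

lemma Tm_self (m : ℕ) : Tm m m = 0 := by
  unfold Tm
  rcases Nat.eq_zero_or_pos m with h | h
  · simp [h]
  · rw [if_neg (by omega)]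
    simp [Nat.sub_self]

/-- The key alternating-sum identity: A_{k+1} = B_{k+1} - A_k. -/
lemma abel (h : ℕ) : ∀ k : ℕ,
    ∑ n ∈ Finset.range (k + 1), (-1 : ℤ) ^ n * (Nat.choose (n + h + 1) n)
      = ∑ n ∈ Finset.range (k + 1), (-1 : ℤ) ^ n * (Nat.choose (n + h) n)
        - ∑ n ∈ Finset.range k, (-1 : ℤ) ^ n * (Nat.choose (n + h + 1) n) := by
  intro k
  induction k with
  | zero => simp
  | succ k ih =>
      simp only [Finset.sum_range_succ]
      simp only [Finset.sum_range_succ] at ih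
      have pascal : (Nat.choose (k + 1 + h + 1) (k + 1) : ℤ)
          = (Nat.choose (k + h + 1) k : ℤ) + (Nat.choose (k + h + 1) (k + 1) : ℤ) := by
        have : Nat.choose (k + h + 1 + 1) (k + 1)
            = Nat.choose (k + h + 1) k + Nat.choose (k + h + 1) (k + 1) :=
          Nat.choose_succ_succ' (k + h + 1) k ▸ (Nat.choose_succ_succ (k + h + 1) k)
        rw [show k + 1 + h + 1 = k + h + 1 + 1 by ring, this]
        push_cast; ring
      have e : (Nat.choose (k + 1 + h) (k + 1) : ℤ) = (Nat.choose (k + h + 1) (k + 1) : ℤ) := by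
        rw [show k + 1 + h = k + h + 1 by ring]
      rw [e]
      linear_combination ih + (-1 : ℤ) ^ (k + 1) * pascal

/-- Pascal-type recurrence for `Tm`, genus at least 2. -/
lemma Tm_key (h k : ℕ) : Tm (h + k + 3) (h + 2) = Tm (h + k + 2) (h + 1) + Tm (h + k + 2) (h + 2) := by
  unfold Tm
  rw [if_neg (by omega), if_neg (by omega), if_neg (by omega)]
  rw [show h + k + 3 - (h + 2) - 1 = k by omega, show h + k + 3 - (h + 2) = k + 1 by omega,
    show h + k + 2 - (h + 1) - 1 = k by omega, show h + k + 2 - (h + 1) = k + 1 by omega,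
    show h + k + 2 - (h + 2) - 1 = k - 1 by omega, show h + k + 2 - (h + 2) = k by omega]
  simp only [show ∀ n : ℕ, n + (h + 2) - 1 = n + h + 1 from fun n => by omega,
    show ∀ n : ℕ, n + (h + 1) - 1 = n + h from fun n => by omega]
  rcases k with _ | k'
  · simp
  · rw [show k' + 1 - 1 = k' by omega]
    linear_combination (-1 : ℤ) ^ (k' + 1) * abel h (k' + 1)

lemma negsum (k : ℕ) : ∑ n ∈ Finset.range k, (-1 : ℤ) ^ n = if k % 2 = 0 then 0 else 1 := by
  induction k with
  | zero => simp
  | succ k ih =>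
      rw [Finset.sum_range_succ, ih]
      rcases Nat.even_or_odd k with hk | hk
      · have h1 : k % 2 = 0 := Nat.even_iff.mp hk
        have h2 : (k + 1) % 2 = 1 := by omega
        rw [h1, h2, hk.neg_one_pow]
        norm_num
      · have h1 : k % 2 = 1 := Nat.odd_iff.mp hk
        have h2 : (k + 1) % 2 = 0 := by omega
        rw [h1, h2, hk.neg_one_pow]
        norm_num
lemma Tm_one (m : ℕ) : Tm (m + 2) 1 = if m % 2 = 0 then 1 else 0 := by
  unfold Tm
  rw [if_neg (by omega), show m + 2 - 1 - 1 = m by omega, show m + 2 - 1 = m + 1 by omega]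
  simp only [show ∀ n : ℕ, n + 1 - 1 = n from fun n => by omega, Nat.choose_self, Nat.cast_one,
    mul_one, negsum]
  rcases Nat.even_or_odd m with hm | hm
  · have h1 : m % 2 = 0 := Nat.even_iff.mp hm
    have h2 : (m + 1) % 2 = 1 := by omega
    rw [h1, h2, hm.neg_one_pow]
    norm_num
  · have h1 : m % 2 = 1 := Nat.odd_iff.mp hm
    have h2 : (m + 1) % 2 = 0 := by omega
    rw [h1, h2]
    norm_num

lemma Tm_one_rec (M : ℕ) : Tm (M + 3) 1 = Tm (M + 2) 1 + (-1 : ℤ) ^ (M + 3) := by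
  have h1 := Tm_one (M + 1)
  have h2 := Tm_one M
  rw [show M + 3 = M + 1 + 2 by ring] at *
  rw [h1, h2]
  rcases Nat.even_or_odd M with hm | hm
  · have e0 : M % 2 = 0 := Nat.even_iff.mp hm
    have e1 : (M + 1) % 2 = 1 := by omega
    have : Odd (M + 1 + 2) := by
      rcases hm with ⟨r, hr⟩; exact ⟨r + 1, by omega⟩
    rw [e0, e1, this.neg_one_pow]
    norm_num
  · have e0 : M % 2 = 1 := Nat.odd_iff.mp hm
    have e1 : (M + 1) % 2 = 0 := by omega
    have : Even (M + 1 + 2) := by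
      rcases hm with ⟨r, hr⟩; exact ⟨r + 2, by omega⟩
    rw [e0, e1, this.neg_one_pow]
    norm_num

/-- Main recurrence in terms of `Tm`. -/
lemma main_rec (M : ℕ) :
    ∑ i ∈ Finset.Icc 1 (M + 2), (i : ℤ) ^ 2 * Tm (M + 3) i
      = 2 * ∑ i ∈ Finset.Icc 1 (M + 1), (i : ℤ) ^ 2 * Tm (M + 2) i
        + 2 * ∑ i ∈ Finset.Icc 1 (M + 1), (i : ℤ) * Tm (M + 2) i
        + ∑ i ∈ Finset.Icc 1 (M + 1), Tm (M + 2) i + (-1 : ℤ) ^ (M + 3) := by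
  -- peel off the bottom term i = 1
  have peel : ∀ F : ℕ → ℤ, ∑ i ∈ Finset.Icc 1 (M + 2), F i
      = ∑ i ∈ Finset.Icc 2 (M + 2), F i + F 1 := by
    intro F
    rw [← Finset.sum_erase_add _ _ (show 1 ∈ Finset.Icc 1 (M + 2) by simp),
      Finset.Icc_erase_left, ← Finset.Icc_add_one_left_eq_Ioc]
    rfl
  rw [peel]
  -- apply the key recurrence on Icc 2 (M+2)
  have hkey : ∀ i ∈ Finset.Icc 2 (M + 2),
      (i : ℤ) ^ 2 * Tm (M + 3) i
        = (i : ℤ) ^ 2 * Tm (M + 2) (i - 1) + (i : ℤ) ^ 2 * Tm (M + 2) i := by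
    intro i hi
    rw [Finset.mem_Icc] at hi
    have h := Tm_key (i - 2) (M + 2 - i)
    rw [show i - 2 + (M + 2 - i) + 3 = M + 3 by omega,
      show i - 2 + (M + 2 - i) + 2 = M + 2 by omega,
      show i - 2 + 2 = i by omega, show i - 2 + 1 = i - 1 by omega] at h
    rw [h]; ring
  rw [Finset.sum_congr rfl hkey, Finset.sum_add_distrib]
  -- reindex the shifted sum
  have shift : ∑ i ∈ Finset.Icc 2 (M + 2), (i : ℤ) ^ 2 * Tm (M + 2) (i - 1)
      = ∑ j ∈ Finset.Icc 1 (M + 1), ((j : ℤ) + 1) ^ 2 * Tm (M + 2) j := by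
    rw [show (2 : ℕ) = 1 + 1 by rfl, show M + 2 = M + 1 + 1 by rfl,
      ← Finset.map_add_right_Icc 1 (M + 1) 1, Finset.sum_map]
    apply Finset.sum_congr rfl
    intro j _
    simp only [addRightEmbedding_apply, Nat.add_sub_cancel]
    push_cast
    ring
  -- drop the top term of the unshifted sum
  have drop : ∑ i ∈ Finset.Icc 2 (M + 2), (i : ℤ) ^ 2 * Tm (M + 2) i
      = ∑ i ∈ Finset.Icc 1 (M + 1), (i : ℤ) ^ 2 * Tm (M + 2) i - Tm (M + 2) 1 := by
    have e1 : ∑ i ∈ Finset.Icc 1 (M + 2), (i : ℤ) ^ 2 * Tm (M + 2) i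
        = ∑ i ∈ Finset.Icc 2 (M + 2), (i : ℤ) ^ 2 * Tm (M + 2) i
          + (1 : ℤ) ^ 2 * Tm (M + 2) 1 := peel _
    have e2 : ∑ i ∈ Finset.Icc 1 (M + 2), (i : ℤ) ^ 2 * Tm (M + 2) i
        = ∑ i ∈ Finset.Icc 1 (M + 1), (i : ℤ) ^ 2 * Tm (M + 2) i
          + ((M + 2 : ℕ) : ℤ) ^ 2 * Tm (M + 2) (M + 2) := by
      exact Finset.sum_Icc_succ_top (by omega) _
    rw [Tm_self, mul_zero, add_zero] at e2
    rw [e2] at e1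
    linarith [e1]
  rw [shift, drop]
  -- combine the two remaining sums
  have combine : ∑ j ∈ Finset.Icc 1 (M + 1), ((j : ℤ) + 1) ^ 2 * Tm (M + 2) j
      + ∑ i ∈ Finset.Icc 1 (M + 1), (i : ℤ) ^ 2 * Tm (M + 2) i
      = 2 * ∑ i ∈ Finset.Icc 1 (M + 1), (i : ℤ) ^ 2 * Tm (M + 2) i
        + 2 * ∑ i ∈ Finset.Icc 1 (M + 1), (i : ℤ) * Tm (M + 2) i
        + ∑ i ∈ Finset.Icc 1 (M + 1), Tm (M + 2) i := by
    rw [← Finset.sum_add_distrib, Finset.mul_sum, Finset.mul_sum,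
      ← Finset.sum_add_distrib, ← Finset.sum_add_distrib]
    apply Finset.sum_congr rfl
    intro j _
    ring
  have hone : ((1 : ℕ) : ℤ) ^ 2 * Tm (M + 3) 1 = Tm (M + 2) 1 + (-1 : ℤ) ^ (M + 3) := by
    rw [Tm_one_rec]; push_cast; ring
  rw [hone]
  linarith [combine]

/-- For all integers c ≥ 6, the total square palindromic genus satisfies
g²_p(c) = 2·g²_p(c−2) + 2·g_p(c−2) + t_p(c−2) + (−1)^{⌊(c+1)/2⌋}. -/
theorem g2pTotal_recurrence (c : ℕ) (hc : 6 ≤ c) :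
    g2pTotal c =
      2 * g2pTotal (c - 2) + 2 * gpTotal (c - 2) + tpTotal (c - 2) + (-1 : ℤ) ^ ((c + 1) / 2) := by
  obtain ⟨M, hM⟩ : ∃ M, (c + 1) / 2 = M + 3 := ⟨(c + 1) / 2 - 3, by omega⟩
  have h1 : (c - 1) / 2 = M + 2 := by omega
  have h2 : (c - 2 + 1) / 2 = M + 2 := by omega
  have h3 : (c - 2 - 1) / 2 = M + 1 := by omega
  unfold g2pTotal gpTotal tpTotal
  simp only [tpKnot_eq_Tm, hM, h1, h2, h3]
  exact main_rec M
end

section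
/- For all integers c ≥ 3, the total genus satisfies 432·g(c) = (9c+3)·2^c − 192·(−1)^c; equivalently, g(c) = ((9c+3)·2^{c−3} − 24·(−1)^c)/54. -/
/-- Pairing up a sum over an even range. -/
lemma pairSum (f : ℕ → ℤ) (N : ℕ) :
    ∑ k ∈ Finset.range (2 * N), f k = ∑ i ∈ Finset.range N, (f (2 * i) + f (2 * i + 1)) := by
  induction N with
  | zero => simp
  | succ n ih =>
    have h2 : 2 * (n + 1) = 2 * n + 1 + 1 := by ring
    rw [h2, Finset.sum_range_succ, Finset.sum_range_succ, Finset.sum_range_succ, ih]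
    ring

/-- Σ k·C(m,k) = m·2^(m-1). -/
lemma sumKC (m : ℕ) : ∑ k ∈ Finset.range (m + 1), ((k : ℤ) * Nat.choose m k) =
    (m : ℤ) * 2 ^ (m - 1) := by
  cases m with
  | zero => simp
  | succ s =>
    rw [Finset.sum_range_succ']
    have h : ∀ i ∈ Finset.range (s + 1),
        ((i + 1 : ℕ) : ℤ) * Nat.choose (s + 1) (i + 1) = ((s : ℤ) + 1) * Nat.choose s i := by
      intro i _
      have := Nat.add_one_mul_choose_eq s i
      push_cast
      push_cast at this
      linarith
    rw [Finset.sum_congr rfl h, ← Finset.mul_sum]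
    have : ∑ i ∈ Finset.range (s + 1), (Nat.choose s i : ℤ) = 2 ^ s := by
      exact_mod_cast congrArg (Nat.cast : ℕ → ℤ) (Nat.sum_range_choose s)
    rw [this]
    simp

/-- Σ (-1)^k·k·C(m,k) = 0 for m ≥ 2. -/
lemma altKC (m : ℕ) (hm : 2 ≤ m) :
    ∑ k ∈ Finset.range (m + 1), (-1 : ℤ) ^ k * ((k : ℤ) * Nat.choose m k) = 0 := by
  obtain ⟨s, rfl⟩ : ∃ s, m = s + 1 := ⟨m - 1, by omega⟩
  rw [Finset.sum_range_succ']
  have h : ∀ i ∈ Finset.range (s + 1),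
      (-1 : ℤ) ^ (i + 1) * (((i + 1 : ℕ) : ℤ) * Nat.choose (s + 1) (i + 1)) =
      -(((s : ℤ) + 1) * ((-1 : ℤ) ^ i * Nat.choose s i)) := by
    intro i _
    have := Nat.add_one_mul_choose_eq s i
    have h2 : ((i + 1 : ℕ) : ℤ) * Nat.choose (s + 1) (i + 1) = ((s : ℤ) + 1) * Nat.choose s i := by
      push_cast
      push_cast at this
      linarith
    rw [h2, pow_succ]
    ring
  rw [Finset.sum_congr rfl h, Finset.sum_neg_distrib, ← Finset.mul_sum]
  rw [Int.alternating_sum_range_choose_of_ne (by omega : s ≠ 0)]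
  simp

/-- Key binomial identity: 4·Σ (i+1)·C(m,2i+1) = (m+2)·2^(m-1) for m ≥ 2. -/
lemma keySum (m : ℕ) (hm : 2 ≤ m) :
    ∑ i ∈ Finset.range (m + 2), (((i : ℤ) + 1) * Nat.choose m (2 * i + 1)) * 4 =
      ((m : ℤ) + 2) * 2 ^ (m - 1) := by
  set f : ℕ → ℤ := fun k => (1 - (-1 : ℤ) ^ k) * ((k : ℤ) + 1) * Nat.choose m k with hf
  have h1 : ∑ k ∈ Finset.range (2 * (m + 2)), f k =
      ∑ i ∈ Finset.range (m + 2), (f (2 * i) + f (2 * i + 1)) := pairSum f (m + 2)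
  have h2 : ∀ i ∈ Finset.range (m + 2),
      f (2 * i) + f (2 * i + 1) = (((i : ℤ) + 1) * Nat.choose m (2 * i + 1)) * 4 := by
    intro i _
    have e1 : ((-1 : ℤ)) ^ (2 * i) = 1 := by rw [pow_mul]; norm_num
    have e2 : ((-1 : ℤ)) ^ (2 * i + 1) = -1 := by rw [pow_succ, e1]; ring
    simp only [hf, e1, e2]
    push_cast
    ring
  have h3 : ∑ k ∈ Finset.range (2 * (m + 2)), f k = ∑ k ∈ Finset.range (m + 1), f k := by
    refine (Finset.sum_subset ?_ ?_).symm
    · intro k hk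
      simp only [Finset.mem_range] at *
      omega
    · intro k _ hk
      simp only [Finset.mem_range, not_lt] at hk
      have : Nat.choose m k = 0 := Nat.choose_eq_zero_of_lt (by omega)
      simp [hf, this]
  have h4 : ∑ k ∈ Finset.range (m + 1), f k = ((m : ℤ) + 2) * 2 ^ (m - 1) := by
    have expand : ∀ k ∈ Finset.range (m + 1), f k =
        ((k : ℤ) * Nat.choose m k) + (Nat.choose m k : ℤ)
          - (-1 : ℤ) ^ k * ((k : ℤ) * Nat.choose m k) - (-1 : ℤ) ^ k * Nat.choose m k := by
      intro k _
      simp only [hf]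
      ring
    rw [Finset.sum_congr rfl expand]
    rw [Finset.sum_sub_distrib, Finset.sum_sub_distrib, Finset.sum_add_distrib]
    have hC : ∑ k ∈ Finset.range (m + 1), (Nat.choose m k : ℤ) = 2 ^ m := by
      exact_mod_cast congrArg (Nat.cast : ℕ → ℤ) (Nat.sum_range_choose m)
    rw [sumKC m, altKC m hm, hC, Int.alternating_sum_range_choose_of_ne (by omega : m ≠ 0)]
    have hm1 : m - 1 + 1 = m := by omega
    rw [← hm1, pow_succ]
    push_cast
    ring
  rw [← Finset.sum_congr rfl h2, ← h1, h3, h4]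

/-- `gTotal` as a sum over `range (c+1)`. -/
lemma gTotal_eq (c : ℕ) : gTotal c = ∑ i ∈ Finset.range (c + 1), (i : ℤ) * tKnot c i := by
  apply Finset.sum_subset
  · intro i hi
    simp only [Finset.mem_Icc, Finset.mem_range] at *
    omega
  · intro i hi hni
    simp only [Finset.mem_Icc, Finset.mem_range] at hi hni
    rcases Nat.eq_zero_or_pos i with h0 | h0
    · simp [h0]
    · have h2 : c - 2 * i = 0 := by omega
      have h3 : i ≠ 0 := by omega
      simp [tKnot, h2, h3]

/-- Per-term identity for the difference of consecutive total genera. -/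
lemma term_eq (c i : ℕ) (hc : 3 ≤ c) :
    (i : ℤ) * tKnot (c + 1) i + (i : ℤ) * tKnot c i =
      (i : ℤ) * Nat.choose (c - 1) (2 * i - 1) := by
  rcases Nat.eq_zero_or_pos i with h0 | h0
  · simp [h0]
  have hi : i ≠ 0 := by omega
  have hs1 : c + 1 - 1 = c := by omega
  have hs2 : ((-1 : ℤ)) ^ (c - 1) = -(-1 : ℤ) ^ c := by
    conv_rhs => rw [show c = (c - 1) + 1 by omega]
    rw [pow_succ]
    ring
  simp only [tKnot, if_neg hi, hs1, hs2]
  by_cases h2 : 2 * i ≤ c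
  · have hrange : c + 1 - 2 * i = (c - 2 * i) + 1 := by omega
    rw [hrange, Finset.sum_range_succ]
    have hsym : Nat.choose (c - 2 * i + 2 * i - 1) (c - 2 * i) = Nat.choose (c - 1) (2 * i - 1) := by
      have e1 : c - 2 * i + 2 * i - 1 = c - 1 := by omega
      rw [e1]
      have e2 : c - 2 * i = (c - 1) - (2 * i - 1) := by omega
      rw [e2, Nat.choose_symm (by omega : 2 * i - 1 ≤ c - 1)]
    have hsgn : ((-1 : ℤ)) ^ (c - 2 * i) = (-1 : ℤ) ^ c := by
      have e : c - 2 * i + 2 * i = c := by omega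
      have : ((-1 : ℤ)) ^ c = (-1 : ℤ) ^ (c - 2 * i) * ((-1 : ℤ)) ^ (2 * i) := by
        rw [← pow_add, e]
      rw [this, pow_mul]
      norm_num
    rw [hsym, hsgn]
    have hcc : ((-1 : ℤ)) ^ c * (-1 : ℤ) ^ c = 1 := by
      rw [← pow_add]
      exact Even.neg_one_pow ⟨c, by ring⟩
    linear_combination (i : ℤ) * (Nat.choose (c - 1) (2 * i - 1) : ℤ) * hcc
  · have e1 : c + 1 - 2 * i = 0 := by omega
    have e2 : c - 2 * i = 0 := by omega
    have e3 : Nat.choose (c - 1) (2 * i - 1) = 0 := Nat.choose_eq_zero_of_lt (by omega)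
    rw [e1, e2, e3]
    simp

/-- The key recurrence: 16·(g(c+1) + g(c)) = (c+1)·2^c. -/
lemma step_eq (c : ℕ) (hc : 3 ≤ c) :
    16 * (gTotal (c + 1) + gTotal c) = ((c : ℤ) + 1) * 2 ^ c := by
  rw [gTotal_eq (c + 1), gTotal_eq c]
  have h2 : c - 2 * (c + 1) = 0 := by omega
  have h3 : (c + 1 : ℕ) ≠ 0 := by omega
  have hlast : ((c + 1 : ℕ) : ℤ) * tKnot c (c + 1) = 0 := by
    simp only [tKnot, if_neg h3, h2]
    simp
  have hext : ∑ i ∈ Finset.range (c + 2), (i : ℤ) * tKnot c i =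
      ∑ i ∈ Finset.range (c + 1), (i : ℤ) * tKnot c i := by
    rw [show c + 2 = c + 1 + 1 from rfl, Finset.sum_range_succ, hlast, add_zero]
  rw [← hext, ← Finset.sum_add_distrib]
  rw [Finset.sum_congr rfl (fun i _ => term_eq c i hc)]
  -- reindex: drop i = 0 term
  rw [Finset.sum_range_succ']
  have h : ∀ i ∈ Finset.range (c + 1),
      ((i + 1 : ℕ) : ℤ) * Nat.choose (c - 1) (2 * (i + 1) - 1) =
      (((i : ℤ) + 1) * Nat.choose (c - 1) (2 * i + 1)) := by
    intro i _
    have e : 2 * (i + 1) - 1 = 2 * i + 1 := by omega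
    rw [e]
    push_cast
    ring
  rw [Finset.sum_congr rfl h]
  have hm : 2 ≤ c - 1 := by omega
  have hkey := keySum (c - 1) hm
  have e1 : c - 1 + 2 = c + 1 := by omega
  have e2 : ((c - 1 : ℕ) : ℤ) = (c : ℤ) - 1 := by
    have : (1 : ℕ) ≤ c := by omega
    push_cast [this]
    ring
  rw [e1, e2] at hkey
  have e3 : (2 : ℤ) ^ c = 2 ^ (c - 1 - 1) * 4 := by
    have : c - 1 - 1 + 2 = c := by omega
    rw [← this, pow_add]
    norm_num
  rw [← Finset.sum_mul] at hkey
  push_cast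
  rw [e3]
  linarith [hkey]

/-- For all integers c ≥ 3, the total genus satisfies
432·g(c) = (9c+3)·2^c − 192·(−1)^c, i.e. g(c) = ((9c+3)·2^{c−3} − 24·(−1)^c)/54. -/
theorem gTotal_formula (c : ℕ) (hc : 3 ≤ c) :
    432 * gTotal c = (9 * (c : ℤ) + 3) * 2 ^ c - 192 * (-1 : ℤ) ^ c := by
  induction c, hc using Nat.le_induction with
  | base => decide
  | succ n hn ih =>
    have hstep := step_eq n hn
    rw [pow_succ, pow_succ]
    push_cast
    linear_combination 27 * hstep - ih
end

section
/- For all integers c ≥ 4, the total square genus satisfies 1728·g2(c) = (9c² + 15c − 16)·2^c − 1280·(−1)^c; equivalently, g2(c) = ((9c²+15c−16)·2^{c−6} − 20·(−1)^c)/27. -/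
open Finset

lemma odd_step (m : ℕ) (w : ℕ → ℤ) :
    ∑ i ∈ range (m+2), w i * ((m+1).choose (2*i+1) : ℤ) =
      ∑ i ∈ range (m+1), w i * (m.choose (2*i) : ℤ)
      + ∑ i ∈ range (m+1), w i * (m.choose (2*i+1) : ℤ) := by
  rw [Finset.sum_range_succ]
  have h0 : (m+1).choose (2*(m+1)+1) = 0 := Nat.choose_eq_zero_of_lt (by omega)
  rw [h0]
  rw [← Finset.sum_add_distrib]
  simp only [Nat.cast_zero, mul_zero, add_zero]
  apply Finset.sum_congr rfl
  intro i _
  have : (m+1).choose (2*i+1) = m.choose (2*i) + m.choose (2*i+1) := by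
    have := Nat.choose_succ_succ m (2*i)
    simpa using this
  rw [this]
  push_cast
  ring

lemma even_step (m : ℕ) (w : ℕ → ℤ) :
    ∑ i ∈ range (m+2), w i * ((m+1).choose (2*i) : ℤ) =
      ∑ i ∈ range (m+1), w (i+1) * (m.choose (2*i+1) : ℤ)
      + ∑ i ∈ range (m+1), w i * (m.choose (2*i) : ℤ) := by
  rw [Finset.sum_range_succ' (fun i => w i * ((m+1).choose (2*i) : ℤ))]
  have key : ∀ i, (m+1).choose (2*(i+1)) = m.choose (2*i+1) + m.choose (2*i+2) := by
    intro i
    have := Nat.choose_succ_succ m (2*i+1)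
    have h : 2*(i+1) = (2*i+1)+1 := by ring
    rw [h, this]
  have h2 : ∑ i ∈ range (m+1), w i * (m.choose (2*i) : ℤ)
      = w 0 * (m.choose 0 : ℤ) + ∑ i ∈ range (m+1), w (i+1) * (m.choose (2*i+2) : ℤ) := by
    have := Finset.sum_range_succ' (fun i => w i * ((m).choose (2*i) : ℤ)) (m+1)
    rw [Finset.sum_range_succ] at this
    have h0 : (m).choose (2*(m+1)) = 0 := Nat.choose_eq_zero_of_lt (by omega)
    rw [h0] at this
    simp only [Nat.cast_zero, mul_zero, add_zero] at this
    rw [this]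
    have : ∀ i, 2*(i+1) = 2*i+2 := fun i => by ring
    simp only [this, mul_zero, add_comm]
  rw [h2]
  have h3 : ∀ i ∈ range (m+1), w (i+1) * ((m+1).choose (2*(i+1)) : ℤ)
      = w (i+1) * (m.choose (2*i+1) : ℤ) + w (i+1) * (m.choose (2*i+2) : ℤ) := by
    intro i _
    rw [key i]
    push_cast
    ring
  rw [Finset.sum_congr rfl h3, Finset.sum_add_distrib]
  simp [Nat.choose_zero_right]
  ring

lemma key_s16 (m : ℕ) (hm : 3 ≤ m) :
    2 * (∑ i ∈ range (m+1), (1:ℤ) * (m.choose (2*i+1) : ℤ)) = (2:ℤ)^m ∧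
    2 * (∑ i ∈ range (m+1), (1:ℤ) * (m.choose (2*i) : ℤ)) = (2:ℤ)^m ∧
    8 * (∑ i ∈ range (m+1), ((i:ℤ)+1) * (m.choose (2*i+1) : ℤ)) = (2:ℤ)^m * ((m:ℤ)+2) ∧
    8 * (∑ i ∈ range (m+1), ((i:ℤ)+1) * (m.choose (2*i) : ℤ)) = (2:ℤ)^m * ((m:ℤ)+4) ∧
    32 * (∑ i ∈ range (m+1), ((i:ℤ)+1)^2 * (m.choose (2*i+1) : ℤ)) = (2:ℤ)^m * ((m:ℤ)+1) * ((m:ℤ)+4) ∧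
    32 * (∑ i ∈ range (m+1), ((i:ℤ)+1)^2 * (m.choose (2*i) : ℤ)) = (2:ℤ)^m * ((m:ℤ)^2+9*(m:ℤ)+16) := by
  induction m, hm using Nat.le_induction with
  | base =>
    norm_num [Finset.sum_range_succ, Nat.choose]
  | succ m hm ih =>
    obtain ⟨hqo, hqe, hpo, hpe, hbo, hbe⟩ := ih
    have shift1 : ∑ i ∈ range (m+1), ((i:ℤ)+1+1) * (m.choose (2*i+1) : ℤ)
        = ∑ i ∈ range (m+1), ((i:ℤ)+1) * (m.choose (2*i+1) : ℤ)
          + ∑ i ∈ range (m+1), (1:ℤ) * (m.choose (2*i+1) : ℤ) := by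
      rw [← Finset.sum_add_distrib]; apply Finset.sum_congr rfl; intros; ring
    have shift2 : ∑ i ∈ range (m+1), ((i:ℤ)+1+1)^2 * (m.choose (2*i+1) : ℤ)
        = ∑ i ∈ range (m+1), ((i:ℤ)+1)^2 * (m.choose (2*i+1) : ℤ)
          + 2 * ∑ i ∈ range (m+1), ((i:ℤ)+1) * (m.choose (2*i+1) : ℤ)
          + ∑ i ∈ range (m+1), (1:ℤ) * (m.choose (2*i+1) : ℤ) := by
      rw [Finset.mul_sum, ← Finset.sum_add_distrib, ← Finset.sum_add_distrib]
      apply Finset.sum_congr rfl; intros; ring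
    have t1 := odd_step m (fun _ => (1:ℤ))
    have t2 := even_step m (fun _ => (1:ℤ))
    have t3 := odd_step m (fun i => ((i:ℤ)+1))
    have t4 := even_step m (fun i => ((i:ℤ)+1))
    have t5 := odd_step m (fun i => ((i:ℤ)+1)^2)
    have t6 := even_step m (fun i => ((i:ℤ)+1)^2)
    push_cast at t1 t2 t3 t4 t5 t6 ⊢
    refine ⟨?_, ?_, ?_, ?_, ?_, ?_⟩
    · linear_combination 2*t1 + hqe + hqo
    · linear_combination 2*t2 + hqo + hqe
    · linear_combination 8*t3 + hpe + hpo
    · linear_combination 8*t4 + 8*shift1 + hpo + 4*hqo + hpe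
    · linear_combination 32*t5 + hbe + hbo
    · linear_combination 32*t6 + 32*shift2 + hbo + 8*hpo + 16*hqo + hbe

lemma tKnot_add (m j : ℕ) :
    tKnot (m+2) (j+1) + tKnot (m+1) (j+1) = (m.choose (2*j+1) : ℤ) := by
  rw [tKnot, tKnot, if_neg (Nat.succ_ne_zero j), if_neg (Nat.succ_ne_zero j)]
  have e1 : m + 2 - 1 = m + 1 := rfl
  have e2 : m + 1 - 1 = m := rfl
  rw [e1, e2]
  by_cases h : 2*j+1 ≤ m
  · have h1 : m + 2 - 2*(j+1) = (m + 1 - 2*(j+1)) + 1 := by omega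
    rw [h1, Finset.sum_range_succ]
    have h2 : (m + 1 - 2*(j+1)) + 2*(j+1) - 1 = m := by omega
    rw [h2]
    have h3 : m.choose (m + 1 - 2*(j+1)) = m.choose (2*j+1) := by
      have : m + 1 - 2*(j+1) = m - (2*j+1) := by omega
      rw [this, Nat.choose_symm h]
    rw [h3]
    have hs : (-1:ℤ)^(m+1) = -(-1:ℤ)^m := by rw [pow_succ]; ring
    rw [hs]
    have h4 : (-(-1:ℤ)^m) * (-1:ℤ)^(m+1-2*(j+1)) = 1 := by
      rw [← hs, ← pow_add]
      have : m + 1 + (m + 1 - 2*(j+1)) = 2*(m-j) := by omega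
      rw [this, pow_mul]
      norm_num
    linear_combination ((m.choose (2*j+1) : ℤ)) * h4
  · have h1 : m + 2 - 2*(j+1) = 0 := by omega
    have h2 : m + 1 - 2*(j+1) = 0 := by omega
    rw [h1, h2]
    have h3 : m.choose (2*j+1) = 0 := Nat.choose_eq_zero_of_lt (by omega)
    simp [h3]

lemma tKnot_zero (c i : ℕ) (h : c ≤ 2*i) : tKnot c i = 0 := by
  rcases Nat.eq_zero_or_pos i with hi | hi
  · simp [tKnot, hi]
  · rw [tKnot, if_neg (by omega)]
    have : c - 2*i = 0 := by omega
    simp [this]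

lemma icc_to_range (K c : ℕ) :
    ∑ i ∈ Finset.Icc 1 K, (i:ℤ)^2 * tKnot c i
      = ∑ j ∈ range K, ((j:ℤ)+1)^2 * tKnot c (j+1) := by
  rw [← Finset.Ico_add_one_right_eq_Icc, Finset.sum_Ico_eq_sum_range]
  have : K + 1 - 1 = K := by omega
  rw [this]
  apply Finset.sum_congr rfl
  intro j _
  rw [add_comm 1 j]
  push_cast
  ring_nf

lemma g2_rec (m : ℕ) (hm : 3 ≤ m) :
    32 * (g2Total (m+2) + g2Total (m+1)) = (2:ℤ)^m * ((m:ℤ)+1) * ((m:ℤ)+4) := by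
  have e1 : (m + 2 - 1) / 2 = (m+1)/2 := by omega
  have e2 : (m + 1 - 1) / 2 = m/2 := by omega
  rw [g2Total, g2Total, e1, e2]
  have ext1 : ∑ i ∈ Finset.Icc 1 (m/2), (i:ℤ)^2 * tKnot (m+1) i
      = ∑ i ∈ Finset.Icc 1 ((m+1)/2), (i:ℤ)^2 * tKnot (m+1) i := by
    apply Finset.sum_subset
    · exact Finset.Icc_subset_Icc_right (by omega)
    · intro x hx hx2
      simp only [Finset.mem_Icc] at hx hx2
      have : tKnot (m+1) x = 0 := tKnot_zero _ _ (by omega)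
      rw [this, mul_zero]
  rw [ext1, icc_to_range, icc_to_range, ← Finset.sum_add_distrib]
  have step1 : ∑ j ∈ range ((m+1)/2), (((j:ℤ)+1)^2 * tKnot (m+2) (j+1) + ((j:ℤ)+1)^2 * tKnot (m+1) (j+1))
      = ∑ j ∈ range ((m+1)/2), ((j:ℤ)+1)^2 * (m.choose (2*j+1) : ℤ) := by
    apply Finset.sum_congr rfl
    intro j _
    rw [← mul_add, tKnot_add]
  rw [step1]
  have step2 : ∑ j ∈ range ((m+1)/2), ((j:ℤ)+1)^2 * (m.choose (2*j+1) : ℤ)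
      = ∑ j ∈ range (m+1), ((j:ℤ)+1)^2 * (m.choose (2*j+1) : ℤ) := by
    apply Finset.sum_subset
    · exact Finset.range_subset_range.mpr (by omega)
    · intro x hx hx2
      simp only [Finset.mem_range] at hx hx2
      have : m.choose (2*x+1) = 0 := Nat.choose_eq_zero_of_lt (by omega)
      rw [this]
      norm_num
  rw [step2]
  exact (key_s16 m hm).2.2.2.2.1

/-- For all integers c ≥ 4, the total square genus satisfies
1728·g²(c) = (9c² + 15c − 16)·2^c − 1280·(−1)^c, i.e.
g²(c) = ((9c²+15c−16)·2^{c−6} − 20·(−1)^c)/27. -/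
theorem g2Total_formula (c : ℕ) (hc : 4 ≤ c) :
    1728 * g2Total c = (9 * (c : ℤ) ^ 2 + 15 * c - 16) * 2 ^ c - 1280 * (-1 : ℤ) ^ c := by
  induction c, hc using Nat.le_induction with
  | base =>
    norm_num [g2Total, tKnot, Finset.sum_range_succ, Nat.choose]
  | succ c hc ih =>
    obtain ⟨k, rfl⟩ := Nat.exists_eq_add_of_le hc
    have hrec := g2_rec (k+3) (by omega)
    have h45 : 4 + k = k + 4 := by omega
    have h55 : k + 4 + 1 = k + 5 := by omega
    have h33 : k + 3 + 2 = k + 5 := by omega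
    have h34 : k + 3 + 1 = k + 4 := by omega
    rw [h45] at ih ⊢
    rw [h55]
    rw [h33, h34] at hrec
    push_cast at ih hrec ⊢
    linear_combination 54 * hrec - ih
end
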